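/- arXiv:1805.01196 — 5 statements merged into one kernel-verified Lean document; each statement's English description precedes it below -/
import Mathlib

section
/- Let m ≥ 1 and 0 ≤ k ≤ m. Then the cardinality of Θ_k equals 2·binom(2m,k) if k < m, and equals binom(2m,m) − 1 if k = m. -/
/-- `wt₂(u)`: the number of ones among the binary digits `u_0, …, u_{2m-1}` of `u`. -/
def wt2 (m u : ℕ) : ℕ := ((Finset.range (2 * m)).filter fun i => u.testBit i).card

/-- `O(u) = #{0 ≤ i ≤ m-1 : u_{2i+1} = 1}`. -/
def Ofun (m u : ℕ) : ℕ := ((Finset.range m).filter fun i => u.testBit (2 * i + 1)).card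

/-- `E(u) = #{0 ≤ i ≤ m-1 : u_{2i} = 1}`. -/
def Efun (m u : ℕ) : ℕ := ((Finset.range m).filter fun i => u.testBit (2 * i)).card

/-- `Θ_k = {ζ^u : 0 ≤ u ≤ 4^m - 1, |O(u) - E(u)| = m - k}`. -/
def ThetaK {K : Type*} [Monoid K] (m : ℕ) (ζ : K) (k : ℕ) : Set K :=
  {z | ∃ u : ℕ, u ≤ 4 ^ m - 1 ∧ ((Ofun m u : ℤ) - (Efun m u : ℤ)).natAbs = m - k ∧ z = ζ ^ u}

/-- `Θ^{(r)} = {ζ^u : 0 ≤ u ≤ 4^m - 1, wt₂(u) = 2m - r}`. -/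
def ThetaR {K : Type*} [Monoid K] (m : ℕ) (ζ : K) (r : ℕ) : Set K :=
  {z | ∃ u : ℕ, u ≤ 4 ^ m - 1 ∧ wt2 m u = 2 * m - r ∧ z = ζ ^ u}



lemma testBit_sum_two_pow (s : Finset ℕ) (j : ℕ) :
    (∑ i ∈ s, 2 ^ i).testBit j = decide (j ∈ s) := by
  induction s using Finset.induction_on_max generalizing j with
  | empty => simp
  | insert a s ha ih =>
    have hna : a ∉ s := fun h => lt_irrefl a (ha a h)
    have hs : ∑ i ∈ s, 2 ^ i < 2 ^ a := Nat.geomSum_lt le_rfl (fun k hk => ha k hk)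
    rw [Finset.sum_insert hna]
    rcases lt_trichotomy j a with h | rfl | h
    · rw [Nat.testBit_two_pow_add_gt h, ih]
      have : j ≠ a := Nat.ne_of_lt h
      simp [this]
    · rw [Nat.testBit_two_pow_add_eq, Nat.testBit_lt_two_pow hs]
      simp
    · have h1 : 2 ^ a + ∑ i ∈ s, 2 ^ i < 2 ^ j := by
        have h2 : 2 ^ (a + 1) ≤ 2 ^ j := Nat.pow_le_pow_right (by norm_num) h
        have : 2 ^ (a + 1) = 2 ^ a + 2 ^ a := by ring
        omega
      rw [Nat.testBit_lt_two_pow h1]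
      have hj : j ∉ insert a s := by
        simp only [Finset.mem_insert]
        push_neg
        exact ⟨Nat.ne_of_gt h, fun hj => absurd (ha j hj) (by omega)⟩
      simp [hj]

lemma card_weight (n k : ℕ) :
    (((Finset.range (2 ^ n)).filter fun u =>
      ((Finset.range n).filter fun i => u.testBit i).card = k).card) = n.choose k := by
  have hpc : ((Finset.range n).powersetCard k).card = n.choose k := by
    rw [Finset.card_powersetCard, Finset.card_range]
  rw [← hpc]
  refine Finset.card_bij' (fun u _ => (Finset.range n).filter fun i => u.testBit i)
    (fun C _ => ∑ i ∈ C, 2 ^ i) ?_ ?_ ?_ ?_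
  · intro u hu
    simp only [Finset.mem_filter] at hu
    exact Finset.mem_powersetCard.2 ⟨Finset.filter_subset _ _, hu.2⟩
  · intro C hC
    rw [Finset.mem_powersetCard] at hC
    have hlt : ∑ i ∈ C, 2 ^ i < 2 ^ n :=
      Nat.geomSum_lt le_rfl (fun i hi => Finset.mem_range.1 (hC.1 hi))
    have heq : ((Finset.range n).filter fun i => (∑ i ∈ C, 2 ^ i).testBit i) = C := by
      ext i
      simp only [Finset.mem_filter, Finset.mem_range, testBit_sum_two_pow, decide_eq_true_eq]
      exact ⟨fun h => h.2, fun h => ⟨Finset.mem_range.1 (hC.1 h), h⟩⟩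
    simp only [Finset.mem_filter, Finset.mem_range]
    exact ⟨hlt, by rw [heq, hC.2]⟩
  · intro u hu
    simp only [Finset.mem_filter, Finset.mem_range] at hu
    refine Nat.eq_of_testBit_eq fun j => ?_
    rw [testBit_sum_two_pow]
    by_cases hj : j < n
    · simp [Finset.mem_filter, Finset.mem_range, hj]
    · have : u < 2 ^ j := lt_of_lt_of_le hu.1 (Nat.pow_le_pow_right (by norm_num) (by omega))
      rw [Nat.testBit_lt_two_pow this]
      simp [Finset.mem_filter, Finset.mem_range, hj]
  · intro C hC
    rw [Finset.mem_powersetCard] at hC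
    ext i
    simp only [Finset.mem_filter, Finset.mem_range, testBit_sum_two_pow, decide_eq_true_eq]
    exact ⟨fun h => h.2, fun h => ⟨Finset.mem_range.1 (hC.1 h), h⟩⟩

lemma filter_range_two_mul (m : ℕ) (p : ℕ → Prop) [DecidablePred p] :
    ((Finset.range (2 * m)).filter p).card =
      ((Finset.range m).filter fun i => p (2 * i)).card +
        ((Finset.range m).filter fun i => p (2 * i + 1)).card := by
  have hsplit : Finset.range (2 * m) =
      (Finset.range m).image (fun i => 2 * i) ∪ (Finset.range m).image (fun i => 2 * i + 1) := by
    ext j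
    simp only [Finset.mem_union, Finset.mem_image, Finset.mem_range]
    constructor
    · intro hj
      rcases Nat.even_or_odd j with ⟨t, ht⟩ | ⟨t, ht⟩
      · exact Or.inl ⟨t, by omega, by omega⟩
      · exact Or.inr ⟨t, by omega, by omega⟩
    · rintro (⟨t, ht, rfl⟩ | ⟨t, ht, rfl⟩) <;> omega
  have hinj1 : Function.Injective (fun i : ℕ => 2 * i) := fun a b h => by simpa using h
  have hinj2 : Function.Injective (fun i : ℕ => 2 * i + 1) := fun a b h => by simpa using h
  have hdisj : Disjoint (((Finset.range m).image (fun i => 2 * i)).filter p)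
      (((Finset.range m).image (fun i => 2 * i + 1)).filter p) := by
    rw [Finset.disjoint_left]
    intro a ha hb
    simp only [Finset.mem_filter, Finset.mem_image] at ha hb
    obtain ⟨⟨s, _, hs⟩, _⟩ := ha
    obtain ⟨⟨t, _, ht⟩, _⟩ := hb
    omega
  rw [hsplit, Finset.filter_union, Finset.card_union_of_disjoint hdisj,
    Finset.filter_image, Finset.filter_image,
    Finset.card_image_of_injective _ hinj1, Finset.card_image_of_injective _ hinj2]

/-- mask with ones exactly at the odd positions `2i+1`, `i < m`. -/
def maskO (m : ℕ) : ℕ := ∑ i ∈ (Finset.range m).image fun i => 2 * i + 1, 2 ^ i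
/-- mask with ones exactly at the even positions `2i`, `i < m`. -/
def maskE (m : ℕ) : ℕ := ∑ i ∈ (Finset.range m).image fun i => 2 * i, 2 ^ i

lemma testBit_maskO (m j : ℕ) : (maskO m).testBit j = decide (∃ i < m, 2 * i + 1 = j) := by
  rw [maskO, testBit_sum_two_pow]
  simp [Finset.mem_image]

lemma testBit_maskE (m j : ℕ) : (maskE m).testBit j = decide (∃ i < m, 2 * i = j) := by
  rw [maskE, testBit_sum_two_pow]
  simp [Finset.mem_image]

lemma maskO_lt (m : ℕ) : maskO m < 2 ^ (2 * m) := by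
  refine Nat.geomSum_lt le_rfl ?_
  intro k hk
  simp only [Finset.mem_image, Finset.mem_range] at hk
  omega

lemma maskE_lt (m : ℕ) : maskE m < 2 ^ (2 * m) := by
  refine Nat.geomSum_lt le_rfl ?_
  intro k hk
  simp only [Finset.mem_image, Finset.mem_range] at hk
  omega

lemma Ofun_le (m u : ℕ) : Ofun m u ≤ m := by
  exact (Finset.card_filter_le _ _).trans (Finset.card_range m).le

lemma Efun_le (m u : ℕ) : Efun m u ≤ m := by
  exact (Finset.card_filter_le _ _).trans (Finset.card_range m).le

lemma Ofun_xor_maskO (m u : ℕ) : Ofun m (u ^^^ maskO m) = m - Ofun m u := by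
  have h : ∀ i ∈ Finset.range m,
      ((u ^^^ maskO m).testBit (2 * i + 1) = true) = ¬(u.testBit (2 * i + 1) = true) := by
    intro i hi
    rw [Finset.mem_range] at hi
    rw [Nat.testBit_xor, testBit_maskO]
    have : (∃ j < m, 2 * j + 1 = 2 * i + 1) := ⟨i, hi, rfl⟩
    simp [this, hi]
  rw [Ofun, Finset.filter_congr fun i hi => by rw [h i hi], Finset.filter_not,
    Finset.card_sdiff_of_subset (Finset.filter_subset _ _)]
  simp [Ofun]

lemma Efun_xor_maskO (m u : ℕ) : Efun m (u ^^^ maskO m) = Efun m u := by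
  unfold Efun
  congr 1
  refine Finset.filter_congr fun i hi => ?_
  rw [Finset.mem_range] at hi
  rw [Nat.testBit_xor, testBit_maskO]
  have : ¬(∃ j < m, 2 * j + 1 = 2 * i) := by rintro ⟨j, _, hj⟩; omega
  simp [this]

lemma Efun_xor_maskE (m u : ℕ) : Efun m (u ^^^ maskE m) = m - Efun m u := by
  have h : ∀ i ∈ Finset.range m,
      ((u ^^^ maskE m).testBit (2 * i) = true) = ¬(u.testBit (2 * i) = true) := by
    intro i hi
    rw [Finset.mem_range] at hi
    rw [Nat.testBit_xor, testBit_maskE]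
    have : (∃ j < m, 2 * j = 2 * i) := ⟨i, hi, rfl⟩
    simp [this, hi]
  rw [Efun, Finset.filter_congr fun i hi => by rw [h i hi], Finset.filter_not,
    Finset.card_sdiff_of_subset (Finset.filter_subset _ _)]
  simp [Efun]

lemma Ofun_xor_maskE (m u : ℕ) : Ofun m (u ^^^ maskE m) = Ofun m u := by
  unfold Ofun
  congr 1
  refine Finset.filter_congr fun i hi => ?_
  rw [Finset.mem_range] at hi
  rw [Nat.testBit_xor, testBit_maskE]
  have : ¬(∃ j < m, 2 * j = 2 * i + 1) := by rintro ⟨j, _, hj⟩; omega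
  simp [this]

lemma wt2_eq (m u : ℕ) : wt2 m u = Efun m u + Ofun m u :=
  filter_range_two_mul m fun i => u.testBit i

lemma wt2eq (m u : ℕ) : ((Finset.range (2 * m)).filter fun u_1 => u.testBit u_1).card
    = Efun m u + Ofun m u :=
  filter_range_two_mul m fun i => u.testBit i

lemma countO (m k : ℕ) :
    ((Finset.range (2 ^ (2 * m))).filter fun u =>
      (Ofun m u : ℤ) - Efun m u = (m : ℤ) - k).card = (2 * m).choose k := by
  rw [← card_weight (2 * m) k]
  refine Finset.card_bij' (fun u _ => u ^^^ maskO m) (fun v _ => v ^^^ maskO m) ?_ ?_ ?_ ?_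
  · intro u hu
    simp only [Finset.mem_filter, Finset.mem_range] at hu ⊢
    refine ⟨Nat.xor_lt_two_pow hu.1 (maskO_lt m), ?_⟩
    rw [wt2eq m, Efun_xor_maskO, Ofun_xor_maskO]
    have h1 := Ofun_le m u
    have h2 := Efun_le m u
    have := hu.2
    omega
  · intro v hv
    simp only [Finset.mem_filter, Finset.mem_range] at hv ⊢
    refine ⟨Nat.xor_lt_two_pow hv.1 (maskO_lt m), ?_⟩
    rw [Efun_xor_maskO, Ofun_xor_maskO]
    have h1 := Ofun_le m v
    have h2 := Efun_le m v
    have := hv.2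
    rw [wt2eq m] at this
    omega
  · intro u _; simp [Nat.xor_assoc]
  · intro v _; simp [Nat.xor_assoc]

lemma countE (m k : ℕ) :
    ((Finset.range (2 ^ (2 * m))).filter fun u =>
      (Efun m u : ℤ) - Ofun m u = (m : ℤ) - k).card = (2 * m).choose k := by
  rw [← card_weight (2 * m) k]
  refine Finset.card_bij' (fun u _ => u ^^^ maskE m) (fun v _ => v ^^^ maskE m) ?_ ?_ ?_ ?_
  · intro u hu
    simp only [Finset.mem_filter, Finset.mem_range] at hu ⊢
    refine ⟨Nat.xor_lt_two_pow hu.1 (maskE_lt m), ?_⟩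
    rw [wt2eq m, Efun_xor_maskE, Ofun_xor_maskE]
    have h1 := Ofun_le m u
    have h2 := Efun_le m u
    have := hu.2
    omega
  · intro v hv
    simp only [Finset.mem_filter, Finset.mem_range] at hv ⊢
    refine ⟨Nat.xor_lt_two_pow hv.1 (maskE_lt m), ?_⟩
    rw [Efun_xor_maskE, Ofun_xor_maskE]
    have h1 := Ofun_le m v
    have h2 := Efun_le m v
    have := hv.2
    rw [wt2eq m] at this
    omega
  · intro u _; simp [Nat.xor_assoc]
  · intro v _; simp [Nat.xor_assoc]

lemma card_Sk (m k : ℕ) (hk : k ≤ m) :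
    ((Finset.range (2 ^ (2 * m))).filter fun u =>
      ((Ofun m u : ℤ) - (Efun m u : ℤ)).natAbs = m - k).card =
      if k = m then (2 * m).choose m else 2 * (2 * m).choose k := by
  have hcast : ((m - k : ℕ) : ℤ) = (m : ℤ) - k := by
    have := hk; push_cast [this]; ring
  have hpred : ∀ u : ℕ, (((Ofun m u : ℤ) - (Efun m u : ℤ)).natAbs = m - k) ↔
      ((Ofun m u : ℤ) - Efun m u = (m : ℤ) - k ∨ (Efun m u : ℤ) - Ofun m u = (m : ℤ) - k) := by
    intro u
    rw [Int.natAbs_eq_iff, hcast]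
    constructor
    · rintro (h | h)
      · exact Or.inl h
      · exact Or.inr (by omega)
    · rintro (h | h)
      · exact Or.inl h
      · exact Or.inr (by omega)
  rw [Finset.filter_congr fun u _ => by rw [hpred u], Finset.filter_or]
  by_cases hkm : k = m
  · subst hkm
    have : ((Finset.range (2 ^ (2 * k))).filter fun u =>
        (Ofun k u : ℤ) - Efun k u = (k : ℤ) - k) =
        ((Finset.range (2 ^ (2 * k))).filter fun u =>
        (Efun k u : ℤ) - Ofun k u = (k : ℤ) - k) := by
      refine Finset.filter_congr fun u _ => ?_
      constructor <;> intro h <;> omega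
    rw [this, Finset.union_self, countE, if_pos rfl]
  · have hdisj : Disjoint
        ((Finset.range (2 ^ (2 * m))).filter fun u =>
          (Ofun m u : ℤ) - Efun m u = (m : ℤ) - k)
        ((Finset.range (2 ^ (2 * m))).filter fun u =>
          (Efun m u : ℤ) - Ofun m u = (m : ℤ) - k) := by
      rw [Finset.disjoint_left]
      intro u hu hv
      simp only [Finset.mem_filter] at hu hv
      have h1 := hu.2
      have h2 := hv.2
      have : k < m := lt_of_le_of_ne hk hkm
      omega
    rw [Finset.card_union_of_disjoint hdisj, countO, countE, if_neg hkm]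
    ring

/-- Let `m ≥ 1` and `0 ≤ k ≤ m`. Then `|Θ_k| = 2·binom(2m,k)` if `k < m`,
and `|Θ_m| = binom(2m,m) - 1`. -/
theorem stmt5 (m : ℕ) (hm : 1 ≤ m) (K : Type*) [Field K] [Algebra (ZMod 2) K]
    [IsAlgClosure (ZMod 2) K] (ζ : K) (hζ : IsPrimitiveRoot ζ (2 ^ (2 * m) - 1))
    (k : ℕ) (hk : k ≤ m) :
    (k < m → (ThetaK m ζ k).ncard = 2 * Nat.choose (2 * m) k) ∧
      (k = m → (ThetaK m ζ k).ncard = Nat.choose (2 * m) m - 1) := by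
  classical
  have h4 : (4 : ℕ) ^ m = 2 ^ (2 * m) := by
    rw [pow_mul]; norm_num
  have hpow : 4 ≤ 2 ^ (2 * m) := by
    calc (4 : ℕ) = 2 ^ 2 := by norm_num
    _ ≤ 2 ^ (2 * m) := Nat.pow_le_pow_right (by norm_num) (by omega)
  set S : Finset ℕ := (Finset.range (2 ^ (2 * m))).filter fun u =>
      ((Ofun m u : ℤ) - (Efun m u : ℤ)).natAbs = m - k with hS
  have hset : ThetaK m ζ k = ↑(S.image (ζ ^ ·)) := by
    ext z
    simp only [ThetaK, Set.mem_setOf_eq, Finset.coe_image, Set.mem_image, Finset.mem_coe,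
      hS, Finset.mem_filter, Finset.mem_range]
    constructor
    · rintro ⟨u, hu1, hu2, rfl⟩
      exact ⟨u, ⟨by omega, hu2⟩, rfl⟩
    · rintro ⟨u, ⟨hu1, hu2⟩, rfl⟩
      exact ⟨u, by omega, hu2, rfl⟩
  rw [hset, Set.ncard_coe_finset]
  -- facts about the extreme elements
  have hOtop : Ofun m (2 ^ (2 * m) - 1) = m := by
    rw [Ofun, Finset.filter_true_of_mem, Finset.card_range]
    intro i hi
    rw [Finset.mem_range] at hi
    rw [Nat.testBit_two_pow_sub_one]
    simpa using by omega
  have hEtop : Efun m (2 ^ (2 * m) - 1) = m := by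
    rw [Efun, Finset.filter_true_of_mem, Finset.card_range]
    intro i hi
    rw [Finset.mem_range] at hi
    rw [Nat.testBit_two_pow_sub_one]
    simpa using by omega
  constructor
  · -- case k < m
    intro hkm
    have hlt : ∀ u ∈ S, u < 2 ^ (2 * m) - 1 := by
      intro u hu
      rw [hS, Finset.mem_filter, Finset.mem_range] at hu
      rcases eq_or_ne u (2 ^ (2 * m) - 1) with rfl | hne
      · exfalso
        rw [hOtop, hEtop] at hu
        simp only [sub_self, Int.natAbs_zero] at hu
        omega
      · omega
    rw [Finset.card_image_of_injOn fun u hu v hv huv =>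
      hζ.pow_inj (hlt u hu) (hlt v hv) huv]
    rw [hS, card_Sk m k hk, if_neg (Nat.ne_of_lt hkm)]
  · -- case k = m
    intro hkm
    have hmk : m - k = 0 := by omega
    have h0 : 0 ∈ S := by
      rw [hS, Finset.mem_filter, Finset.mem_range]
      refine ⟨by positivity, ?_⟩
      simp [Ofun, Efun, Nat.zero_testBit, hmk]
    have hN : 2 ^ (2 * m) - 1 ∈ S := by
      rw [hS, Finset.mem_filter, Finset.mem_range]
      refine ⟨by omega, ?_⟩
      rw [hOtop, hEtop, hmk]
      simp
    have h0N : (0 : ℕ) ≠ 2 ^ (2 * m) - 1 := by omega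
    have himg : S.image (ζ ^ ·) = (S.erase (2 ^ (2 * m) - 1)).image (ζ ^ ·) := by
      conv_lhs => rw [← Finset.insert_erase hN]
      rw [Finset.image_insert]
      refine Finset.insert_eq_self.2 ?_
      have : ζ ^ (2 ^ (2 * m) - 1) = ζ ^ (0 : ℕ) := by
        rw [hζ.pow_eq_one, pow_zero]
      rw [this]
      exact Finset.mem_image_of_mem _ (Finset.mem_erase.2 ⟨h0N, h0⟩)
    rw [himg]
    have hlt : ∀ u ∈ S.erase (2 ^ (2 * m) - 1), u < 2 ^ (2 * m) - 1 := by
      intro u hu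
      rw [Finset.mem_erase, hS, Finset.mem_filter, Finset.mem_range] at hu
      omega
    rw [Finset.card_image_of_injOn fun u hu v hv huv =>
      hζ.pow_inj (hlt u hu) (hlt v hv) huv]
    rw [Finset.card_erase_of_mem hN, hS, card_Sk m k hk, if_pos hkm]
end

section
/- Let V be a 2m-dimensional vector space over 𝔽₂ and let * denote the Schur (coordinatewise) product on 𝔽₂^V, i.e. (c*d)(v) := c(v)·d(v). If m ≥ 3 then there exist c, d ∈ R(3,2m) with c*d ∉ R(5,2m), and if m ≥ 4 then there exist c, d ∈ R(4,2m) with c*d ∉ R(6,2m). In particular, for m ≥ 4 neither the chain R(0,2m) ⊆ R(2,2m) ⊆ … ⊆ R(2m−2,2m) nor the chain R(1,2m) ⊆ R(3,2m) ⊆ … ⊆ R(2m−1,2m) is closed under the Schur product. -/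
noncomputable section

open scoped Pointwise

open Classical in
/-- The characteristic function (with values in `𝔽₂`) of a subset `S ⊆ V`. -/
noncomputable def chi {V : Type*} (S : Set V) : V → ZMod 2 := fun v => if v ∈ S then 1 else 0

/-- The Reed-Muller code `R(r, 2m)` of length `2^{2m}`, spanned by the characteristic
functions of affine subspaces `a + U` with `dim U = 2m - r`; `R(r,2m) = 0` for `r < 0`. -/
noncomputable def RM (V : Type*) [AddCommGroup V] [Module (ZMod 2) V] (m : ℕ) (r : ℤ) :
    Submodule (ZMod 2) (V → ZMod 2) :=
  if r < 0 then ⊥ else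
    Submodule.span (ZMod 2)
      {f | ∃ (a : V) (U : Submodule (ZMod 2) V),
        Module.finrank (ZMod 2) U = 2 * m - r.toNat ∧ f = chi ((a + ·) '' (U : Set V))}

/-- `T_s`: the subspaces spanned by `s`-element subsets of the fixed basis. -/
def Tfam {V : Type*} [AddCommGroup V] [Module (ZMod 2) V] {m : ℕ}
    (b : Module.Basis (Fin (2 * m)) (ZMod 2) V) (s : ℕ) : Set (Submodule (ZMod 2) V) :=
  {U | ∃ S : Finset (Fin (2 * m)), S.card = s ∧ U = Submodule.span (ZMod 2) (⇑b '' ↑S)}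

end

/-- A chain of codes `C_0 ⊆ C_1 ⊆ … ⊆ C_{s-1}` is closed under the Schur (coordinatewise)
product if the Schur product of two codewords of a member lies in the next member. -/
def SchurClosed {V : Type*} (C : ℕ → Submodule (ZMod 2) (V → ZMod 2)) (s : ℕ) : Prop :=
  ∀ i, i + 1 < s → ∀ c ∈ C i, ∀ d ∈ C i, c * d ∈ C (i + 1)

section Aux

open Module Submodule Finset

variable {V : Type*} [AddCommGroup V] [Module (ZMod 2) V]

lemma chi_mul (S T : Set V) : chi S * chi T = chi (S ∩ T) := by
  classical
  funext v
  simp only [chi, Pi.mul_apply, Set.mem_inter_iff]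
  by_cases hS : v ∈ S <;> by_cases hT : v ∈ T <;> simp [hS, hT]

lemma add_self_zero (v : V) : v + v = 0 := by
  have h := two_smul (ZMod 2) v
  have h2 : (2 : ZMod 2) = 0 := by decide
  rw [h2, zero_smul] at h
  exact h.symm

lemma sum_chi [Fintype V] (S : Set V) : ∑ v : V, chi S v = (S.ncard : ZMod 2) := by
  classical
  simp only [chi]
  rw [Finset.sum_boole, Set.ncard_eq_toFinset_card']
  congr 1
  congr 1
  ext v
  simp

lemma even_card_coset [Fintype V] (W U : Submodule (ZMod 2) V)
    (h : finrank (ZMod 2) V < finrank (ZMod 2) W + finrank (ZMod 2) U) (a : V) :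
    Even ((W : Set V) ∩ ((a + ·) '' (U : Set V))).ncard := by
  classical
  haveI : FiniteDimensional (ZMod 2) V := Module.Finite.of_finite
  have hinf : 1 ≤ finrank (ZMod 2) (W ⊓ U : Submodule (ZMod 2) V) := by
    have h1 := Submodule.finrank_sup_add_finrank_inf_eq W U
    have h2 : finrank (ZMod 2) (W ⊔ U : Submodule (ZMod 2) V) ≤ finrank (ZMod 2) V :=
      Submodule.finrank_le _
    omega
  rcases Set.eq_empty_or_nonempty ((W : Set V) ∩ ((a + ·) '' (U : Set V))) with he | ⟨x, hxW, hxU⟩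
  · rw [he, Set.ncard_empty]; exact Even.zero
  · obtain ⟨u₀, hu₀, hx⟩ := hxU
    have hseteq : (W : Set V) ∩ ((a + ·) '' (U : Set V))
        = (x + ·) '' ((W ⊓ U : Submodule (ZMod 2) V) : Set V) := by
      ext y
      constructor
      · rintro ⟨hyW, u, hu, hy⟩
        have hy' : a + u = y := hy
        have hx' : a + u₀ = x := hx
        refine ⟨x + y, ?_, ?_⟩
        · refine Submodule.mem_inf.2 ⟨W.add_mem hxW hyW, ?_⟩
          have : x + y = u₀ + u := by
            rw [← hx', ← hy']
            rw [show a + u₀ + (a + u) = (a + a) + (u₀ + u) by abel, add_self_zero, zero_add]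
          rw [this]
          exact U.add_mem hu₀ hu
        · show x + (x + y) = y
          rw [show x + (x + y) = (x + x) + y by abel, add_self_zero, zero_add]
      · rintro ⟨z, hz, hy⟩
        have hy' : x + z = y := hy
        have hx' : a + u₀ = x := hx
        obtain ⟨hzW, hzU⟩ := Submodule.mem_inf.1 hz
        refine ⟨?_, u₀ + z, U.add_mem hu₀ hzU, ?_⟩
        · rw [← hy']; exact W.add_mem hxW hzW
        · show a + (u₀ + z) = y
          rw [← hy', ← hx']; abel
    rw [hseteq, Set.ncard_image_of_injective _ (add_right_injective x)]
    have hcard : ((W ⊓ U : Submodule (ZMod 2) V) : Set V).ncard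
        = Fintype.card (W ⊓ U : Submodule (ZMod 2) V) := by
      rw [Set.ncard_eq_toFinset_card', Set.toFinset_card]
      rfl
    rw [hcard, card_eq_pow_finrank (K := ZMod 2)]
    rw [ZMod.card]
    exact (Nat.even_pow' (by omega)).2 even_two

lemma sum_RM_zero [Fintype V] {m : ℕ} (r : ℤ) (hr : 0 ≤ r) (hrm : r.toNat ≤ 2 * m)
    (hdim : finrank (ZMod 2) V = 2 * m)
    (W : Submodule (ZMod 2) V) (hW : r.toNat < finrank (ZMod 2) W)
    {f : V → ZMod 2} (hf : f ∈ RM V m r) : ∑ v : V, chi (W : Set V) v * f v = 0 := by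
  classical
  rw [RM, if_neg (by omega)] at hf
  let Φ : (V → ZMod 2) →ₗ[ZMod 2] ZMod 2 :=
    { toFun := fun f => ∑ v : V, chi (W : Set V) v * f v
      map_add' := by intro f g; simp [mul_add, Finset.sum_add_distrib]
      map_smul' := by
        intro c f
        simp only [Pi.smul_apply, smul_eq_mul, RingHom.id_apply, Finset.mul_sum]
        exact Finset.sum_congr rfl fun i _ => by ring }
  have key : Submodule.span (ZMod 2)
      {f | ∃ (a : V) (U : Submodule (ZMod 2) V),
        Module.finrank (ZMod 2) U = 2 * m - r.toNat ∧ f = chi ((a + ·) '' (U : Set V))}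
      ≤ LinearMap.ker Φ := by
    rw [Submodule.span_le]
    rintro f ⟨a, U, hU, rfl⟩
    simp only [SetLike.mem_coe, LinearMap.mem_ker]
    show ∑ v : V, chi (W : Set V) v * chi ((a + ·) '' (U : Set V)) v = 0
    have : ∀ v : V, chi (W : Set V) v * chi ((a + ·) '' (U : Set V)) v
        = chi ((W : Set V) ∩ ((a + ·) '' (U : Set V))) v := by
      intro v
      rw [← chi_mul]; rfl
    simp only [this]
    rw [sum_chi]
    obtain ⟨k, hk⟩ := even_card_coset W U (by omega) a
    rw [hk]
    push_cast
    ring_nf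
    rw [show ((2:ZMod 2)) = 0 by decide]
    ring
  exact key hf

end Aux

section Key

open Module Submodule Finset

variable {V : Type*} [AddCommGroup V] [Module (ZMod 2) V] {n : ℕ}
  (b : Basis (Fin n) (ZMod 2) V)

lemma span_inf (S T : Finset (Fin n)) :
    Submodule.span (ZMod 2) (⇑b '' ↑S) ⊓ Submodule.span (ZMod 2) (⇑b '' ↑T)
      = Submodule.span (ZMod 2) (⇑b '' ↑(S ∩ T)) := by
  ext x
  simp only [Submodule.mem_inf, Basis.mem_span_image, Finset.coe_inter, Set.subset_inter_iff]

lemma finrank_span_basis_image (S : Finset (Fin n)) [Fintype V] :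
    finrank (ZMod 2) (Submodule.span (ZMod 2) (⇑b '' ↑S)) = S.card := by
  classical
  have hli : LinearIndependent (ZMod 2) ((↑) : (⇑b '' ↑S) → V) :=
    b.linearIndependent.linearIndepOn_id.mono (Set.image_subset_range _ _)
  rw [finrank_span_set_eq_card hli]
  have himg : (⇑b '' ↑S).toFinset = S.image b := by ext v; simp
  rw [himg]
  exact Finset.card_image_of_injective _ b.injective

lemma chi_mem_RM {m : ℕ} (hn : n = 2 * m) [Fintype V] (r : ℕ) (S : Finset (Fin n))
    (hS : S.card = 2 * m - r) :
    chi (Submodule.span (ZMod 2) (⇑b '' ↑S) : Set V) ∈ RM V m (r : ℤ) := by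
  rw [RM, if_neg (by omega)]
  apply Submodule.subset_span
  refine ⟨0, Submodule.span (ZMod 2) (⇑b '' ↑S), ?_, ?_⟩
  · rw [finrank_span_basis_image, hS, Int.toNat_natCast]
  · have h0 : ((0 : V) + ·) '' (Submodule.span (ZMod 2) (⇑b '' ↑S) : Set V)
        = (Submodule.span (ZMod 2) (⇑b '' ↑S) : Set V) := by
      ext v; simp
    rw [h0]

lemma card_interval (a c : ℕ) (hac : a + c ≤ n) :
    (Finset.univ.filter (fun i : Fin n => a ≤ (i : ℕ) ∧ (i : ℕ) < a + c)).card = c := by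
  classical
  have : (Finset.univ.filter (fun i : Fin n => a ≤ (i : ℕ) ∧ (i : ℕ) < a + c))
      = Finset.univ.image (fun j : Fin c => (⟨a + (j : ℕ), by omega⟩ : Fin n)) := by
    ext i
    simp only [Finset.mem_filter, Finset.mem_univ, true_and, Finset.mem_image]
    constructor
    · rintro ⟨h1, h2⟩
      exact ⟨⟨(i : ℕ) - a, by omega⟩, by apply Fin.ext; simp; omega⟩
    · rintro ⟨j, rfl⟩
      have := j.isLt
      constructor <;> simp <;> omega
  rw [this, Finset.card_image_of_injective, Finset.card_univ, Fintype.card_fin]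
  intro x y hxy
  have h1 : a + (x : ℕ) = a + (y : ℕ) := congrArg Fin.val hxy
  exact Fin.ext (by omega)

include b in
/-- The key construction: two codewords of `RM r` whose product is not in `RM (2r-1)`. -/
lemma key_construction {m : ℕ} (hn : n = 2 * m) [Fintype V] (r : ℕ) (hr : 1 ≤ r)
    (h2r : 2 * r ≤ 2 * m) :
    ∃ c ∈ RM V m (r : ℤ), ∃ d ∈ RM V m (r : ℤ),
      ∀ r' : ℤ, 0 ≤ r' → r'.toNat ≤ 2 * m → r'.toNat < 2 * r → c * d ∉ RM V m r' := by
  classical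
  haveI : FiniteDimensional (ZMod 2) V := Module.Finite.of_finite
  have hdim : finrank (ZMod 2) V = 2 * m := by
    rw [finrank_eq_card_basis b, Fintype.card_fin, hn]
  set A : Finset (Fin n) := Finset.univ.filter (fun i => 0 ≤ (i : ℕ) ∧ (i : ℕ) < 0 + r) with hA
  set B : Finset (Fin n) := Finset.univ.filter (fun i => r ≤ (i : ℕ) ∧ (i : ℕ) < r + r) with hB
  have hAcard : A.card = r := card_interval 0 r (by omega)
  have hBcard : B.card = r := card_interval r r (by omega)
  have hdisj : Disjoint A B := by
    rw [Finset.disjoint_left]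
    intro i hi hi'
    rw [hA, Finset.mem_filter] at hi
    rw [hB, Finset.mem_filter] at hi'
    omega
  have hABcard : (A ∪ B).card = 2 * r := by
    rw [Finset.card_union_of_disjoint hdisj, hAcard, hBcard]; ring
  have hcardFin : Fintype.card (Fin n) = n := Fintype.card_fin n
  have hAc : Aᶜ.card = 2 * m - r := by
    rw [Finset.card_compl, hAcard, hcardFin, hn]
  have hBc : Bᶜ.card = 2 * m - r := by
    rw [Finset.card_compl, hBcard, hcardFin, hn]
  refine ⟨chi (Submodule.span (ZMod 2) (⇑b '' ↑(Aᶜ)) : Set V), chi_mem_RM b hn r _ hAc,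
    chi (Submodule.span (ZMod 2) (⇑b '' ↑(Bᶜ)) : Set V), chi_mem_RM b hn r _ hBc, ?_⟩
  intro r' h0 h1 h2 hmem
  -- the product is chi of the span over (A ∪ B)ᶜ
  have hprod : chi (Submodule.span (ZMod 2) (⇑b '' ↑(Aᶜ)) : Set V)
      * chi (Submodule.span (ZMod 2) (⇑b '' ↑(Bᶜ)) : Set V)
      = chi (Submodule.span (ZMod 2) (⇑b '' ↑((A ∪ B)ᶜ)) : Set V) := by
    rw [chi_mul]
    congr 1
    rw [← Submodule.coe_inf, span_inf, Finset.compl_union]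
  set W : Submodule (ZMod 2) V := Submodule.span (ZMod 2) (⇑b '' ↑(A ∪ B)) with hW
  have hWrank : finrank (ZMod 2) W = 2 * r := by
    rw [hW, finrank_span_basis_image, hABcard]
  have hzero := sum_RM_zero r' h0 h1 hdim W (by rw [hWrank]; omega) hmem
  rw [hprod] at hzero
  have hone : ∀ v : V, chi (W : Set V) v
      * chi (Submodule.span (ZMod 2) (⇑b '' ↑((A ∪ B)ᶜ)) : Set V) v
      = chi ({0} : Set V) v := by
    intro v
    have h1 : chi (W : Set V) * chi (Submodule.span (ZMod 2) (⇑b '' ↑((A ∪ B)ᶜ)) : Set V)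
        = chi ({0} : Set V) := by
      rw [chi_mul, ← Submodule.coe_inf, hW, span_inf]
      rw [Finset.inter_compl]
      simp only [Finset.coe_empty, Set.image_empty, Submodule.span_empty]
      rfl
    exact congrFun h1 v
  simp only [hone] at hzero
  rw [sum_chi] at hzero
  simp at hzero

end Key

/-- If `m ≥ 3` then there are `c, d ∈ R(3,2m)` with `c*d ∉ R(5,2m)`; if
`m ≥ 4` then there are `c, d ∈ R(4,2m)` with `c*d ∉ R(6,2m)`. In particular, for `m ≥ 4`
neither the chain `R(0,2m) ⊆ R(2,2m) ⊆ … ⊆ R(2m-2,2m)` nor the chain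
`R(1,2m) ⊆ R(3,2m) ⊆ … ⊆ R(2m-1,2m)` is closed under the Schur product. -/
theorem stmt10 (m : ℕ) (hm : 1 ≤ m) (V : Type*) [AddCommGroup V] [Module (ZMod 2) V]
    (b : Module.Basis (Fin (2 * m)) (ZMod 2) V) :
    (3 ≤ m → ∃ c ∈ RM V m 3, ∃ d ∈ RM V m 3, c * d ∉ RM V m 5) ∧
    (4 ≤ m → ∃ c ∈ RM V m 4, ∃ d ∈ RM V m 4, c * d ∉ RM V m 6) ∧
    (4 ≤ m → ¬ SchurClosed (fun i => RM V m (2 * (i : ℤ))) m ∧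
      ¬ SchurClosed (fun i => RM V m (2 * (i : ℤ) + 1)) m) := by
  classical
  haveI : Fintype V := Module.fintypeOfFintype b
  have h3 : 3 ≤ m → ∃ c ∈ RM V m 3, ∃ d ∈ RM V m 3, c * d ∉ RM V m 5 := by
    intro h
    obtain ⟨c, hc, d, hd, hnd⟩ := key_construction b rfl 3 (by omega) (by omega)
    rw [show ((3 : ℕ) : ℤ) = 3 by norm_num] at hc hd
    exact ⟨c, hc, d, hd, hnd 5 (by omega) (by omega) (by omega)⟩
  have h4 : 4 ≤ m → ∃ c ∈ RM V m 4, ∃ d ∈ RM V m 4, c * d ∉ RM V m 6 := by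
    intro h
    obtain ⟨c, hc, d, hd, hnd⟩ := key_construction b rfl 4 (by omega) (by omega)
    rw [show ((4 : ℕ) : ℤ) = 4 by norm_num] at hc hd
    exact ⟨c, hc, d, hd, hnd 6 (by omega) (by omega) (by omega)⟩
  refine ⟨h3, h4, fun h => ⟨?_, ?_⟩⟩
  · intro hSC
    obtain ⟨c, hc, d, hd, hnd⟩ := h4 h
    have := hSC 2 (by omega) c (by
      show c ∈ RM V m (2 * ((2 : ℕ) : ℤ)); rw [show 2 * ((2 : ℕ) : ℤ) = 4 by norm_num]; exact hc)
      d (by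
      show d ∈ RM V m (2 * ((2 : ℕ) : ℤ)); rw [show 2 * ((2 : ℕ) : ℤ) = 4 by norm_num]; exact hd)
    apply hnd
    rw [show (6 : ℤ) = 2 * (((2 + 1 : ℕ)) : ℤ) by norm_num]
    exact this
  · intro hSC
    obtain ⟨c, hc, d, hd, hnd⟩ := h3 (by omega)
    have := hSC 1 (by omega) c (by
      show c ∈ RM V m (2 * ((1 : ℕ) : ℤ) + 1)
      rw [show 2 * ((1 : ℕ) : ℤ) + 1 = 3 by norm_num]; exact hc)
      d (by
      show d ∈ RM V m (2 * ((1 : ℕ) : ℤ) + 1)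
      rw [show 2 * ((1 : ℕ) : ℤ) + 1 = 3 by norm_num]; exact hd)
    apply hnd
    rw [show (5 : ℤ) = 2 * (((1 + 1 : ℕ)) : ℤ) + 1 by norm_num]
    exact this
end

section
/- Let m ≥ 1, let I ⊆ {0,1,…,2m−1} be a subset with |I| = k, and let u be the unique integer with 0 ≤ u < 2^{2m}−1 and u ≡ Σ_{i∈I}(−2)^i − (4^m−1)/3 (mod 2^{2m}−1). Then O(u) − E(u) = m − k (as integers); in particular, wt₂(u) is even if and only if m−k is even. -/

lemma sum_range_two_mul {M : Type*} [AddCommMonoid M] (m : ℕ) (f : ℕ → M) :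
    ∑ i ∈ Finset.range (2 * m), f i =
      ∑ i ∈ Finset.range m, f (2 * i) + ∑ i ∈ Finset.range m, f (2 * i + 1) := by
  induction m with
  | zero => simp
  | succ m ih =>
    have h : 2 * (m + 1) = (2 * m + 1) + 1 := by ring
    rw [h, Finset.sum_range_succ, Finset.sum_range_succ, ih, Finset.sum_range_succ,
      Finset.sum_range_succ]
    abel

lemma geom_two (n : ℕ) : ∑ i ∈ Finset.range n, 2 ^ i = 2 ^ n - 1 := by
  induction n with
  | zero => simp
  | succ n ih =>
    rw [Finset.sum_range_succ, ih, pow_succ]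
    have : 1 ≤ 2 ^ n := Nat.one_le_two_pow
    omega

lemma testBit_sum_pow (n : ℕ) (s : Finset ℕ) (hs : s ⊆ Finset.range n) (j : ℕ) :
    (∑ i ∈ s, 2 ^ i).testBit j = decide (j ∈ s) := by
  induction n generalizing s with
  | zero =>
    have : s = ∅ := Finset.subset_empty.mp (by simpa using hs)
    subst this; simp
  | succ n ih =>
    by_cases hn : n ∈ s
    · have hsub : s.erase n ⊆ Finset.range n := by
        intro i hi
        have h1 := Finset.mem_of_mem_erase hi
        have h2 := Finset.ne_of_mem_erase hi
        have := Finset.mem_range.mp (hs h1)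
        exact Finset.mem_range.mpr (by omega)
      have hv : ∑ i ∈ s.erase n, 2 ^ i < 2 ^ n := by
        calc ∑ i ∈ s.erase n, 2 ^ i ≤ ∑ i ∈ Finset.range n, 2 ^ i :=
              Finset.sum_le_sum_of_subset hsub
        _ = 2 ^ n - 1 := geom_two n
        _ < 2 ^ n := by have : 1 ≤ 2 ^ n := Nat.one_le_two_pow; omega
      rw [← Finset.add_sum_erase s _ hn]
      rcases lt_trichotomy j n with hj | hj | hj
      · rw [Nat.testBit_two_pow_add_gt hj, ih _ hsub]
        simp [Finset.mem_erase, hj.ne]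
      · subst hj
        rw [Nat.testBit_two_pow_add_eq, Nat.testBit_lt_two_pow hv]
        simp [hn]
      · have hlt : 2 ^ n + ∑ i ∈ s.erase n, 2 ^ i < 2 ^ j := by
          have h1 : 2 ^ n + ∑ i ∈ s.erase n, 2 ^ i < 2 ^ (n + 1) := by
            rw [pow_succ]; omega
          exact lt_of_lt_of_le h1 (Nat.pow_le_pow_right (by norm_num) hj)
        rw [Nat.testBit_lt_two_pow hlt]
        have : j ∉ s := fun h => by have := Finset.mem_range.mp (hs h); omega
        simp [this]
    · exact ih s (fun i hi => by
        have := Finset.mem_range.mp (hs hi)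
        exact Finset.mem_range.mpr
          (by rcases Nat.lt_succ_iff_lt_or_eq.mp this with h | h
              · exact h
              · exact absurd (h ▸ hi) hn))

/-- Let `m ≥ 1`, `I ⊆ {0, …, 2m-1}` with `|I| = k`, and let `u` be the unique
integer with `0 ≤ u < 2^{2m} - 1` and `u ≡ Σ_{i∈I} (-2)^i - (4^m-1)/3 (mod 2^{2m}-1)`. Then
`O(u) - E(u) = m - k`; in particular `wt₂(u)` is even iff `m - k` is even. -/
theorem stmt14 (m : ℕ) (hm : 1 ≤ m) (I : Finset ℕ) (hI : I ⊆ Finset.range (2 * m))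
    (k : ℕ) (hk : I.card = k) (u : ℕ) (hu : u < 2 ^ (2 * m) - 1)
    (hmod : (u : ℤ) ≡ (∑ i ∈ I, (-2 : ℤ) ^ i) - (4 ^ m - 1) / 3 [ZMOD (2 ^ (2 * m) - 1)]) :
    (Ofun m u : ℤ) - (Efun m u : ℤ) = (m : ℤ) - (k : ℤ) ∧
      (Even (wt2 m u) ↔ Even ((m : ℤ) - (k : ℤ))) := by
  have hpow : (1 : ℕ) ≤ 2 ^ (2 * m) := Nat.one_le_two_pow
  set T : Finset ℕ := (Finset.range (2 * m)).filter
      (fun i => (i % 2 = 0 ∧ i ∉ I) ∨ (i % 2 ≠ 0 ∧ i ∈ I)) with hT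
  set S : ℕ := ∑ i ∈ T, 2 ^ i with hSdef
  have hTsub : T ⊆ Finset.range (2 * m) := Finset.filter_subset _ _
  have hSle : S ≤ 2 ^ (2 * m) - 1 := by
    calc S ≤ ∑ i ∈ Finset.range (2 * m), 2 ^ i := Finset.sum_le_sum_of_subset hTsub
    _ = 2 ^ (2 * m) - 1 := geom_two _
  have hSbit : ∀ j, S.testBit j = decide (j ∈ T) := fun j => testBit_sum_pow _ _ hTsub j
  -- the RHS of the congruence is exactly -S
  have hdiv : ((4 : ℤ) ^ m - 1) / 3 = ∑ j ∈ Finset.range m, (4 : ℤ) ^ j := by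
    have h3 : ((4 : ℤ) ^ m - 1) = 3 * ∑ j ∈ Finset.range m, (4 : ℤ) ^ j := by
      have h := geom_sum_mul (4 : ℤ) m
      norm_num at h
      linarith
    rw [h3, Int.mul_ediv_cancel_left _ (by norm_num)]
  have hkey : (∑ i ∈ I, (-2 : ℤ) ^ i) - ((4 : ℤ) ^ m - 1) / 3 = -(S : ℤ) := by
    rw [hdiv]
    have hI' : ∑ i ∈ I, (-2 : ℤ) ^ i
        = ∑ i ∈ Finset.range (2 * m), (if i ∈ I then (-2 : ℤ) ^ i else 0) := by
      rw [← Finset.sum_filter, Finset.filter_mem_eq_inter, Finset.inter_eq_right.mpr hI]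
    have h4 : ∑ j ∈ Finset.range m, (4 : ℤ) ^ j
        = ∑ i ∈ Finset.range (2 * m), (if i % 2 = 0 then (2 : ℤ) ^ i else 0) := by
      rw [sum_range_two_mul m (fun i => if i % 2 = 0 then (2 : ℤ) ^ i else 0)]
      have e1 : ∀ i : ℕ, (2 * i) % 2 = 0 := fun i => by omega
      have e2 : ∀ i : ℕ, (2 * i + 1) % 2 = 1 := fun i => by omega
      simp only [e1, e2, if_true, if_pos, if_neg, one_ne_zero, if_false]
      rw [Finset.sum_const_zero, add_zero]
      refine Finset.sum_congr rfl fun i _ => ?_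
      rw [pow_mul]; norm_num
    have hS' : (S : ℤ) = ∑ i ∈ Finset.range (2 * m),
        (if (i % 2 = 0 ∧ i ∉ I) ∨ (i % 2 ≠ 0 ∧ i ∈ I) then (2 : ℤ) ^ i else 0) := by
      rw [hSdef]
      push_cast
      rw [hT, ← Finset.sum_filter]
    rw [hI', h4, hS', ← Finset.sum_sub_distrib, ← Finset.sum_neg_distrib]
    refine Finset.sum_congr rfl fun i _ => ?_
    by_cases hie : i % 2 = 0
    · have hev : Even i := Nat.even_iff.mpr hie
      have hneg : (-2 : ℤ) ^ i = 2 ^ i := hev.neg_pow 2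
      by_cases hiI : i ∈ I <;> simp [hie, hiI, hneg]
    · have hod : Odd i := Nat.odd_iff.mpr (by omega)
      have hneg : (-2 : ℤ) ^ i = -(2 ^ i) := hod.neg_pow 2
      by_cases hiI : i ∈ I <;> simp [hie, hiI, hneg]
  rw [hkey] at hmod
  have hdvd : ((2 : ℤ) ^ (2 * m) - 1) ∣ ((u : ℤ) + (S : ℤ)) := by
    have h1 := hmod.dvd
    have h2 : (-(S : ℤ) - (u : ℤ)) = -((u : ℤ) + (S : ℤ)) := by ring
    rw [h2, dvd_neg] at h1
    exact h1
  have hcast : ((2 : ℤ) ^ (2 * m) - 1) = ((2 ^ (2 * m) - 1 : ℕ) : ℤ) := by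
    rw [Nat.cast_sub hpow]; push_cast; ring
  have hdvdN : (2 ^ (2 * m) - 1) ∣ (u + S) := by
    rw [hcast] at hdvd
    exact_mod_cast hdvd
  obtain ⟨c, hc⟩ := hdvdN
  have hN3 : 3 ≤ 2 ^ (2 * m) - 1 := by
    have : 2 ^ 2 ≤ 2 ^ (2 * m) := Nat.pow_le_pow_right (by norm_num) (by omega)
    omega
  have hc2 : c < 2 := by
    by_contra hcc
    push_neg at hcc
    have h1 : (2 ^ (2 * m) - 1) * 2 ≤ (2 ^ (2 * m) - 1) * c :=
      Nat.mul_le_mul_left _ hcc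
    rw [← hc] at h1
    omega
  interval_cases c
  · -- u + S = 0
    simp only [Nat.mul_zero] at hc
    have hu0 : u = 0 := by omega
    have hS0 : S = 0 := by omega
    have hTe : T = ∅ := by
      by_contra h
      obtain ⟨i, hi⟩ := Finset.nonempty_iff_ne_empty.mpr h
      have h1 : 2 ^ i ≤ S :=
        Finset.single_le_sum (f := fun i => 2 ^ i) (fun _ _ => Nat.zero_le _) hi
      have h2 : 0 < 2 ^ i := Nat.two_pow_pos i
      omega
    have hkm : k = m := by
      rw [← hk]
      have hIeq : I = (Finset.range (2 * m)).filter (fun i => i % 2 = 0) := by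
        ext i
        simp only [Finset.mem_filter, Finset.mem_range]
        constructor
        · intro h
          refine ⟨Finset.mem_range.mp (hI h), ?_⟩
          by_contra hie
          have : i ∈ T := Finset.mem_filter.mpr ⟨hI h, Or.inr ⟨hie, h⟩⟩
          simp [hTe] at this
        · rintro ⟨h1, h2⟩
          by_contra hiI
          have : i ∈ T := Finset.mem_filter.mpr ⟨Finset.mem_range.mpr h1, Or.inl ⟨h2, hiI⟩⟩
          simp [hTe] at this
      rw [hIeq, Finset.card_filter,
        sum_range_two_mul m (fun i => if i % 2 = 0 then 1 else 0)]
      have e1 : ∀ i : ℕ, (2 * i) % 2 = 0 := fun i => by omega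
      have e2 : ∀ i : ℕ, (2 * i + 1) % 2 = 1 := fun i => by omega
      simp [e1, e2]
    subst hu0 hkm
    constructor
    · simp [Ofun, Efun]
    · simp [wt2]
  · -- u + S = 2^(2m) - 1
    simp only [Nat.mul_one] at hc
    have hSpos : 1 ≤ S := by omega
    have hSeq : S = 2 ^ (2 * m) - (u + 1) := by omega
    have hubit : ∀ j, j < 2 * m → u.testBit j = !decide (j ∈ T) := by
      intro j hj
      have h1 : S.testBit j = (decide (j < 2 * m) && ! u.testBit j) := by
        rw [hSeq]
        exact Nat.testBit_two_pow_sub_succ (by omega) j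
      rw [hSbit j] at h1
      have h2 : decide (j < 2 * m) = true := decide_eq_true hj
      rw [h2, Bool.true_and] at h1
      rw [h1, Bool.not_not]
    have hTeven : ∀ i, i < m → (2 * i ∈ T ↔ 2 * i ∉ I) := by
      intro i him
      rw [hT, Finset.mem_filter, Finset.mem_range]
      constructor
      · rintro ⟨-, h | h⟩
        · exact h.2
        · exact absurd (by omega : (2 * i) % 2 = 0) h.1
      · intro h
        exact ⟨by omega, Or.inl ⟨by omega, h⟩⟩
    have hTodd : ∀ i, i < m → (2 * i + 1 ∈ T ↔ 2 * i + 1 ∈ I) := by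
      intro i him
      rw [hT, Finset.mem_filter, Finset.mem_range]
      constructor
      · rintro ⟨-, h | h⟩
        · exact absurd h.1 (by omega)
        · exact h.2
      · intro h
        exact ⟨by omega, Or.inr ⟨by omega, h⟩⟩
    have hE : Efun m u = ((Finset.range m).filter (fun i => 2 * i ∈ I)).card := by
      unfold Efun
      congr 1
      refine Finset.filter_congr fun i hi => ?_
      rw [Finset.mem_range] at hi
      rw [hubit (2 * i) (by omega)]
      simp [hTeven i hi]
    have hO : Ofun m u = ((Finset.range m).filter (fun i => ¬(2 * i + 1 ∈ I))).card := by
      unfold Ofun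
      congr 1
      refine Finset.filter_congr fun i hi => ?_
      rw [Finset.mem_range] at hi
      rw [hubit (2 * i + 1) (by omega)]
      simp [hTodd i hi]
    have hOB : ((Finset.range m).filter (fun i => 2 * i + 1 ∈ I)).card + Ofun m u = m := by
      rw [hO]
      have h := Finset.card_filter_add_card_filter_not
        (s := Finset.range m) (p := fun i => 2 * i + 1 ∈ I)
      rw [Finset.card_range] at h
      exact h
    have hkab : ((Finset.range m).filter (fun i => 2 * i ∈ I)).card
        + ((Finset.range m).filter (fun i => 2 * i + 1 ∈ I)).card = k := by
      rw [← hk]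
      have h1 : I.card = ∑ i ∈ Finset.range (2 * m), (if i ∈ I then 1 else 0) := by
        rw [← Finset.sum_filter, Finset.filter_mem_eq_inter, Finset.inter_eq_right.mpr hI,
          Finset.card_eq_sum_ones]
      rw [h1, sum_range_two_mul m (fun i => if i ∈ I then 1 else 0),
        Finset.card_filter, Finset.card_filter]
    have h1 : (Ofun m u : ℤ) - (Efun m u : ℤ) = (m : ℤ) - (k : ℤ) := by omega
    have hwt : wt2 m u = Ofun m u + Efun m u := by
      unfold wt2 Ofun Efun
      rw [Finset.card_filter, Finset.card_filter, Finset.card_filter,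
        sum_range_two_mul m (fun i => if u.testBit i then 1 else 0)]
      exact Nat.add_comm _ _
    refine ⟨h1, ?_⟩
    rw [hwt, ← Int.even_coe_nat]
    push_cast
    rw [Int.even_add, ← Int.even_sub, h1]
end

section
/- Let m ≥ 1. With respect to the inner product ⟨x,y⟩ := 2^{−m} Σ_{v∈V} x_v y_v on ℝ^V, the dual lattice of the Barnes-Wall lattice BW equals BW', i.e. {x ∈ ℝ^V : ⟨x,y⟩ ∈ ℤ for all y ∈ BW} = BW'. -/
open Classical in
/-- The Barnes-Wall lattice `BW_{2m}`, the `ℤ`-span of the vectors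
`2^{⌊(2m-r+1)/2⌋} Σ_{v∈U} e_v` for `U ∈ T_r`, `0 ≤ r ≤ 2m`. -/
noncomputable def BWlat {V : Type*} [AddCommGroup V] [Module (ZMod 2) V] {m : ℕ}
    (b : Module.Basis (Fin (2 * m)) (ZMod 2) V) : Submodule ℤ (V → ℝ) :=
  Submodule.span ℤ
    {x | ∃ r ≤ 2 * m, ∃ U ∈ Tfam b r,
      x = fun v => if v ∈ U then (2 : ℝ) ^ ((2 * m - r + 1) / 2) else 0}

open Classical in
/-- The lattice `BW' = BW_{2m}^#`, the `ℤ`-span of the vectors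
`2^{⌊(2m-r)/2⌋} Σ_{v∈U} e_v` for `U ∈ T_r`, `0 ≤ r ≤ 2m`. -/
noncomputable def BWdual {V : Type*} [AddCommGroup V] [Module (ZMod 2) V] {m : ℕ}
    (b : Module.Basis (Fin (2 * m)) (ZMod 2) V) : Submodule ℤ (V → ℝ) :=
  Submodule.span ℤ
    {x | ∃ r ≤ 2 * m, ∃ U ∈ Tfam b r,
      x = fun v => if v ∈ U then (2 : ℝ) ^ ((2 * m - r) / 2) else 0}

namespace BW15


open Classical in
noncomputable def gen (n : ℕ) (t : ℤ) (S : Finset (Fin n)) : (Fin n → ZMod 2) → ℝ :=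
  fun v => if ∀ i ∉ S, v i = 0 then (2:ℝ) ^ ((t - (S.card : ℤ)) / 2) else 0

noncomputable def Lmod (n : ℕ) (t : ℤ) : Submodule ℤ ((Fin n → ZMod 2) → ℝ) :=
  Submodule.span ℤ (Set.range (gen n t))

def IsInt (r : ℝ) : Prop := ∃ k : ℤ, r = (k : ℝ)

lemma IsInt.add {r s : ℝ} (hr : IsInt r) (hs : IsInt s) : IsInt (r + s) := by
  obtain ⟨a, rfl⟩ := hr; obtain ⟨b, rfl⟩ := hs; exact ⟨a + b, by push_cast; ring⟩

lemma IsInt.zero : IsInt 0 := ⟨0, by simp⟩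

lemma IsInt.zsmul {r : ℝ} (k : ℤ) (hr : IsInt r) : IsInt (k • r) := by
  obtain ⟨a, rfl⟩ := hr; exact ⟨k * a, by rw [zsmul_eq_mul]; push_cast; ring⟩

noncomputable def dualL {ι : Type*} [Fintype ι] (L : Submodule ℤ (ι → ℝ)) :
    Submodule ℤ (ι → ℝ) where
  carrier := {x | ∀ y ∈ L, IsInt (∑ v, x v * y v)}
  zero_mem' := by intro y hy; simpa using IsInt.zero
  add_mem' := by
    intro a b ha hb y hy
    have : ∑ v, (a + b) v * y v = (∑ v, a v * y v) + ∑ v, b v * y v := by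
      simp [add_mul, Finset.sum_add_distrib]
    rw [this]; exact (ha y hy).add (hb y hy)
  smul_mem' := by
    intro c x hx y hy
    have : ∑ v, (c • x) v * y v = c • ∑ v, x v * y v := by
      simp only [Pi.smul_apply, smul_eq_mul, zsmul_eq_mul, Finset.mul_sum]
      exact Finset.sum_congr rfl fun i _ => by ring
    rw [this]; exact (hx y hy).zsmul c

lemma mem_dualL {ι : Type*} [Fintype ι] {L : Submodule ℤ (ι → ℝ)} {x : ι → ℝ} :
    x ∈ dualL L ↔ ∀ y ∈ L, IsInt (∑ v, x v * y v) := Iff.rfl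

lemma mem_dualL_span {ι : Type*} [Fintype ι] {s : Set (ι → ℝ)} {x : ι → ℝ} :
    x ∈ dualL (Submodule.span ℤ s) ↔ ∀ y ∈ s, IsInt (∑ v, x v * y v) := by
  constructor
  · intro h y hy; exact h y (Submodule.subset_span hy)
  · intro h y hy
    induction hy using Submodule.span_induction with
    | mem y hy => exact h y hy
    | zero => simpa using IsInt.zero
    | add a b _ _ ha hb =>
        have : ∑ v, x v * (a + b) v = (∑ v, x v * a v) + ∑ v, x v * b v := by
          simp [mul_add, Finset.sum_add_distrib]
        rw [this]; exact ha.add hb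
    | smul c a _ ha =>
        have : ∑ v, x v * (c • a) v = c • ∑ v, x v * a v := by
          simp only [Pi.smul_apply, smul_eq_mul, zsmul_eq_mul, Finset.mul_sum]
          exact Finset.sum_congr rfl fun i _ => by ring
        rw [this]; exact ha.zsmul c


lemma gen_eq_smul {n : ℕ} {t t' : ℤ} (h : t' ≤ t) (S : Finset (Fin n)) :
    gen n t S = ((2:ℤ) ^ (((t - (S.card:ℤ))/2 - (t' - (S.card:ℤ))/2).toNat)) • gen n t' S := by
  funext v
  simp only [gen, Pi.smul_apply]
  by_cases hc : ∀ i ∉ S, v i = 0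
  · rw [if_pos hc, if_pos hc, zsmul_eq_mul]
    push_cast
    rw [← zpow_natCast (2:ℝ), ← zpow_add₀ (two_ne_zero)]
    congr 1
    omega
  · rw [if_neg hc, if_neg hc, smul_zero]

lemma gen_succ₂ {n : ℕ} (t : ℤ) (S : Finset (Fin n)) :
    gen n (t + 2) S = (2:ℝ) • gen n t S := by
  have h := gen_eq_smul (n := n) (t := t + 2) (t' := t) (by omega) S
  rw [show ((t + 2 - (S.card:ℤ))/2 - (t - (S.card:ℤ))/2).toNat = 1 from by omega] at h
  rw [h, pow_one, ← Int.cast_smul_eq_zsmul ℝ]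
  norm_num

lemma Lmod_le {n : ℕ} {t t' : ℤ} (h : t' ≤ t) : Lmod n t ≤ Lmod n t' := by
  rw [Lmod, Submodule.span_le]
  rintro x ⟨S, rfl⟩
  rw [gen_eq_smul h S]
  exact Submodule.smul_mem _ _ (Submodule.subset_span ⟨S, rfl⟩)

lemma two_smul_mem {n : ℕ} {t : ℤ} {x : (Fin n → ZMod 2) → ℝ} (hx : x ∈ Lmod n t) :
    (2:ℝ) • x ∈ Lmod n (t + 2) := by
  induction hx using Submodule.span_induction with
  | mem y hy =>
      obtain ⟨S, rfl⟩ := hy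
      rw [← gen_succ₂]
      exact Submodule.subset_span ⟨S, rfl⟩
  | zero => rw [smul_zero]; exact Submodule.zero_mem _
  | add a b _ _ ha hb => rw [smul_add]; exact Submodule.add_mem _ ha hb
  | smul c a _ ha => rw [smul_comm]; exact Submodule.smul_mem _ _ ha

lemma half_mem {n : ℕ} {t : ℤ} {x : (Fin n → ZMod 2) → ℝ} (hx : x ∈ Lmod n (t + 2)) :
    (2⁻¹:ℝ) • x ∈ Lmod n t := by
  induction hx using Submodule.span_induction with
  | mem y hy =>
      obtain ⟨S, rfl⟩ := hy
      rw [gen_succ₂, smul_smul, inv_mul_cancel₀ (two_ne_zero), one_smul]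
      exact Submodule.subset_span ⟨S, rfl⟩
  | zero => rw [smul_zero]; exact Submodule.zero_mem _
  | add a b _ _ ha hb => rw [smul_add]; exact Submodule.add_mem _ ha hb
  | smul c a _ ha => rw [smul_comm]; exact Submodule.smul_mem _ _ ha

lemma half_mem_iff {n : ℕ} {t : ℤ} {x : (Fin n → ZMod 2) → ℝ} :
    (2⁻¹:ℝ) • x ∈ Lmod n t ↔ x ∈ Lmod n (t + 2) := by
  constructor
  · intro h
    have := two_smul_mem h
    rwa [smul_smul, mul_inv_cancel₀ (two_ne_zero), one_smul] at this
  · exact half_mem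

lemma pow_smul_mem_iff {n : ℕ} (k : ℕ) {t : ℤ} {x : (Fin n → ZMod 2) → ℝ} :
    (((2:ℝ) ^ k)⁻¹) • x ∈ Lmod n t ↔ x ∈ Lmod n (t + 2 * k) := by
  induction k generalizing t x with
  | zero => simp
  | succ k ih =>
      have h1 : (((2:ℝ) ^ (k+1))⁻¹) • x = ((2:ℝ)^k)⁻¹ • ((2⁻¹:ℝ) • x) := by
        rw [smul_smul, pow_succ, mul_inv]
      rw [h1, ih, half_mem_iff,
        show t + 2 * (k:ℤ) + 2 = t + 2 * ((k:ℕ)+1 : ℕ) from by push_cast; ring]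


/-! ### Recursion structure -/

noncomputable def Jf {n : ℕ} (a c : (Fin n → ZMod 2) → ℝ) : (Fin (n+1) → ZMod 2) → ℝ :=
  fun v => if v 0 = 0 then a (Fin.tail v) else c (Fin.tail v)

lemma zmod2_cases (z : ZMod 2) : z = 0 ∨ z = 1 := by revert z; decide

lemma Jf_cons0 {n : ℕ} (a c : (Fin n → ZMod 2) → ℝ) (w : Fin n → ZMod 2) :
    Jf a c (Fin.cons 0 w) = a w := by simp [Jf, Fin.tail_cons]

lemma Jf_cons1 {n : ℕ} (a c : (Fin n → ZMod 2) → ℝ) (w : Fin n → ZMod 2) :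
    Jf a c (Fin.cons 1 w) = c w := by simp [Jf, Fin.tail_cons]

lemma Jf_eq_self {n : ℕ} (x : (Fin (n+1) → ZMod 2) → ℝ) :
    Jf (fun w => x (Fin.cons 0 w)) (fun w => x (Fin.cons 1 w)) = x := by
  funext v
  rcases zmod2_cases (v 0) with h | h
  · have hv : Fin.cons (0:ZMod 2) (Fin.tail v) = v := by rw [← h]; exact Fin.cons_self_tail v
    simp [Jf, h, hv]
  · have hv : Fin.cons (1:ZMod 2) (Fin.tail v) = v := by rw [← h]; exact Fin.cons_self_tail v
    simp [Jf, h, hv]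

lemma Jf_add {n : ℕ} (a a' c c' : (Fin n → ZMod 2) → ℝ) :
    Jf (a + a') (c + c') = Jf a c + Jf a' c' := by
  funext v; by_cases h : v 0 = 0 <;> simp [Jf, h]

lemma Jf_zsmul {n : ℕ} (k : ℤ) (a c : (Fin n → ZMod 2) → ℝ) :
    Jf (k • a) (k • c) = k • Jf a c := by
  funext v; by_cases h : v 0 = 0 <;> simp [Jf, h]

lemma Jf_zero {n : ℕ} : Jf (0 : (Fin n → ZMod 2) → ℝ) 0 = 0 := by
  funext v; by_cases h : v 0 = 0 <;> simp [Jf, h]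

lemma sum_split {n : ℕ} (F : (Fin (n+1) → ZMod 2) → ℝ) :
    ∑ v, F v = (∑ w, F (Fin.cons 0 w)) + ∑ w, F (Fin.cons 1 w) := by
  have h1 : ∑ v, F v = ∑ p : ZMod 2 × (Fin n → ZMod 2), F (Fin.cons p.1 p.2) :=
    (Fintype.sum_equiv (Fin.consEquiv (fun _ => ZMod 2)) _ _ (fun p => rfl)).symm
  rw [h1, Fintype.sum_prod_type,
    show (Finset.univ : Finset (ZMod 2)) = {0, 1} from by decide,
    Finset.sum_insert (by decide), Finset.sum_singleton]

def emb (n : ℕ) : Fin n ↪ Fin (n+1) := ⟨Fin.succ, Fin.succ_injective n⟩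

lemma zero_not_mem_map {n : ℕ} (S' : Finset (Fin n)) : (0 : Fin (n+1)) ∉ S'.map (emb n) := by
  simp only [Finset.mem_map, emb, Function.Embedding.coeFn_mk]
  rintro ⟨j, -, hj⟩
  exact Fin.succ_ne_zero j hj

lemma succ_mem_map {n : ℕ} (S' : Finset (Fin n)) (j : Fin n) :
    j.succ ∈ S'.map (emb n) ↔ j ∈ S' := Finset.mem_map' (emb n)

lemma gen_map0 {n : ℕ} (t : ℤ) (S' : Finset (Fin n)) :
    Jf (gen n t S') 0 = gen (n+1) t (S'.map (emb n)) := by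
  funext v
  have hcond : (∀ i ∉ S'.map (emb n), v i = 0) ↔
      (v 0 = 0 ∧ ∀ j ∉ S', Fin.tail v j = 0) := by
    constructor
    · intro h
      refine ⟨h 0 (zero_not_mem_map S'), fun j hj => h j.succ ?_⟩
      rw [succ_mem_map]; exact hj
    · rintro ⟨h0, hs⟩ i hi
      rcases Fin.eq_zero_or_eq_succ i with rfl | ⟨j, rfl⟩
      · exact h0
      · exact hs j (fun hj => hi ((succ_mem_map S' j).2 hj))
  simp only [Jf, gen, Finset.card_map]
  rw [if_congr hcond rfl rfl, ite_and]
  by_cases h : v 0 = 0 <;> simp [h]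

lemma gen_map1 {n : ℕ} (t : ℤ) (S' : Finset (Fin n)) :
    Jf (gen n (t-1) S') (gen n (t-1) S') = gen (n+1) t (insert 0 (S'.map (emb n))) := by
  funext v
  have hcond : (∀ i ∉ insert (0 : Fin (n+1)) (S'.map (emb n)), v i = 0) ↔
      (∀ j ∉ S', Fin.tail v j = 0) := by
    constructor
    · intro h j hj
      refine h j.succ ?_
      simp only [Finset.mem_insert]
      rintro (h1 | h2)
      · exact Fin.succ_ne_zero j h1
      · exact hj ((succ_mem_map S' j).1 h2)
    · intro hs i hi
      rcases Fin.eq_zero_or_eq_succ i with rfl | ⟨j, rfl⟩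
      · exact absurd (Finset.mem_insert_self _ _) hi
      · exact hs j (fun hj => hi (Finset.mem_insert_of_mem ((succ_mem_map S' j).2 hj)))
  have hcard : ((insert (0 : Fin (n+1)) (S'.map (emb n))).card : ℤ) = (S'.card : ℤ) + 1 := by
    rw [Finset.card_insert_of_notMem (zero_not_mem_map S'), Finset.card_map]
    push_cast; ring
  simp only [Jf, gen]
  rw [if_congr hcond rfl rfl]
  have hexp : (t - ((insert (0 : Fin (n+1)) (S'.map (emb n))).card : ℤ)) / 2
      = (t - 1 - (S'.card : ℤ)) / 2 := by rw [hcard]; ring_nf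
  rw [hexp]
  by_cases h : v 0 = 0 <;> simp [h]

lemma finset_split {n : ℕ} (S : Finset (Fin (n+1))) :
    (∃ S' : Finset (Fin n), S = S'.map (emb n)) ∨
    (∃ S' : Finset (Fin n), S = insert 0 (S'.map (emb n))) := by
  classical
  set S' := S.preimage Fin.succ ((Fin.succ_injective n).injOn) with hS'
  have hmem : ∀ j : Fin n, j ∈ S' ↔ j.succ ∈ S := fun j => Finset.mem_preimage
  by_cases h0 : (0 : Fin (n+1)) ∈ S
  · right
    refine ⟨S', Finset.ext fun i => ?_⟩
    rcases Fin.eq_zero_or_eq_succ i with rfl | ⟨j, rfl⟩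
    · simp [h0]
    · simp only [Finset.mem_insert, succ_mem_map, hmem]
      constructor
      · intro h; right; exact h
      · rintro (h | h)
        · exact absurd h (Fin.succ_ne_zero j)
        · exact h
  · left
    refine ⟨S', Finset.ext fun i => ?_⟩
    rcases Fin.eq_zero_or_eq_succ i with rfl | ⟨j, rfl⟩
    · exact ⟨fun h => absurd h h0, fun h => absurd h (zero_not_mem_map S')⟩
    · rw [succ_mem_map, hmem]

lemma Jf_left_mem {n : ℕ} {t : ℤ} {a : (Fin n → ZMod 2) → ℝ} (ha : a ∈ Lmod n t) :
    Jf a 0 ∈ Lmod (n+1) t := by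
  induction ha using Submodule.span_induction with
  | mem y hy =>
      obtain ⟨S', rfl⟩ := hy
      rw [gen_map0]
      exact Submodule.subset_span ⟨_, rfl⟩
  | zero => rw [Jf_zero]; exact Submodule.zero_mem _
  | add a a' _ _ ha ha' =>
      have : Jf (a + a') 0 = Jf a 0 + Jf a' 0 := by
        rw [← Jf_add]; norm_num
      rw [this]; exact Submodule.add_mem _ ha ha'
  | smul k a _ ha =>
      have : Jf (k • a) 0 = k • Jf a 0 := by
        rw [← Jf_zsmul]; norm_num
      rw [this]; exact Submodule.smul_mem _ _ ha

lemma Jf_diag_mem {n : ℕ} {t : ℤ} {c : (Fin n → ZMod 2) → ℝ} (hc : c ∈ Lmod n (t-1)) :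
    Jf c c ∈ Lmod (n+1) t := by
  induction hc using Submodule.span_induction with
  | mem y hy =>
      obtain ⟨S', rfl⟩ := hy
      rw [gen_map1]
      exact Submodule.subset_span ⟨_, rfl⟩
  | zero => rw [Jf_zero]; exact Submodule.zero_mem _
  | add a a' _ _ ha ha' => rw [Jf_add]; exact Submodule.add_mem _ ha ha'
  | smul k a _ ha => rw [Jf_zsmul]; exact Submodule.smul_mem _ _ ha

lemma Lmod_succ_decomp {n : ℕ} {t : ℤ} {x : (Fin (n+1) → ZMod 2) → ℝ}
    (hx : x ∈ Lmod (n+1) t) :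
    ∃ a ∈ Lmod n t, ∃ c ∈ Lmod n (t-1), x = Jf (a + c) c := by
  induction hx using Submodule.span_induction with
  | mem y hy =>
      obtain ⟨S, rfl⟩ := hy
      rcases finset_split S with ⟨S', rfl⟩ | ⟨S', rfl⟩
      · exact ⟨gen n t S', Submodule.subset_span ⟨_, rfl⟩, 0, Submodule.zero_mem _,
          by rw [add_zero, gen_map0]⟩
      · exact ⟨0, Submodule.zero_mem _, gen n (t-1) S', Submodule.subset_span ⟨_, rfl⟩,
          by rw [zero_add, gen_map1]⟩
  | zero => exact ⟨0, Submodule.zero_mem _, 0, Submodule.zero_mem _, by rw [add_zero, Jf_zero]⟩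
  | add a b _ _ ha hb =>
      obtain ⟨a1, ha1, c1, hc1, rfl⟩ := ha
      obtain ⟨a2, ha2, c2, hc2, rfl⟩ := hb
      refine ⟨a1 + a2, Submodule.add_mem _ ha1 ha2, c1 + c2, Submodule.add_mem _ hc1 hc2, ?_⟩
      rw [← Jf_add]
      congr 1
      abel
  | smul k a _ ha =>
      obtain ⟨a1, ha1, c1, hc1, rfl⟩ := ha
      refine ⟨k • a1, Submodule.smul_mem _ _ ha1, k • c1, Submodule.smul_mem _ _ hc1, ?_⟩
      rw [← Jf_zsmul]
      congr 1
      rw [smul_add]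

lemma mem_Lmod_succ_iff {n : ℕ} {t : ℤ} {x : (Fin (n+1) → ZMod 2) → ℝ} :
    x ∈ Lmod (n+1) t ↔
      (fun w => x (Fin.cons 1 w)) ∈ Lmod n (t-1) ∧
      ((fun w => x (Fin.cons 0 w)) - fun w => x (Fin.cons 1 w)) ∈ Lmod n t := by
  constructor
  · intro hx
    obtain ⟨a, ha, c, hc, rfl⟩ := Lmod_succ_decomp hx
    have e1 : (fun w => Jf (a + c) c (Fin.cons 1 w)) = c := by
      funext w; rw [Jf_cons1]
    have e0 : (fun w => Jf (a + c) c (Fin.cons 0 w)) = a + c := by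
      funext w; rw [Jf_cons0]
    rw [e1, e0]
    refine ⟨hc, ?_⟩
    rwa [add_sub_cancel_right]
  · rintro ⟨h1, h2⟩
    have hx : x = Jf ((((fun w => x (Fin.cons 0 w)) - fun w => x (Fin.cons 1 w))
        + fun w => x (Fin.cons 1 w))) (fun w => x (Fin.cons 1 w)) := by
      rw [sub_add_cancel]; exact (Jf_eq_self x).symm
    rw [hx]
    have e : Jf ((((fun w => x (Fin.cons 0 w)) - fun w => x (Fin.cons 1 w))
        + fun w => x (Fin.cons 1 w))) (fun w => x (Fin.cons 1 w))
        = Jf (((fun w => x (Fin.cons 0 w)) - fun w => x (Fin.cons 1 w))) 0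
          + Jf (fun w => x (Fin.cons 1 w)) (fun w => x (Fin.cons 1 w)) := by
      rw [← Jf_add, zero_add]
    rw [e]
    exact Submodule.add_mem _ (Jf_left_mem h2) (Jf_diag_mem h1)

lemma pair_split {n : ℕ} (x : (Fin (n+1) → ZMod 2) → ℝ) (g h : (Fin n → ZMod 2) → ℝ) :
    ∑ v, x v * Jf g h v
      = (∑ w, x (Fin.cons 0 w) * g w) + ∑ w, x (Fin.cons 1 w) * h w := by
  rw [sum_split (fun v => x v * Jf g h v)]
  simp only [Jf_cons0, Jf_cons1]

lemma mem_dual_succ_iff {n : ℕ} {t : ℤ} {x : (Fin (n+1) → ZMod 2) → ℝ} :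
    x ∈ dualL (Lmod (n+1) t) ↔
      (fun w => x (Fin.cons 0 w)) ∈ dualL (Lmod n t) ∧
      ((fun w => x (Fin.cons 0 w)) + fun w => x (Fin.cons 1 w)) ∈ dualL (Lmod n (t-1)) := by
  constructor
  · intro h
    constructor
    · intro g hg
      have h1 := h (Jf g 0) (Jf_left_mem hg)
      rw [pair_split] at h1
      simpa using h1
    · intro g hg
      have h1 := h (Jf g g) (Jf_diag_mem hg)
      rw [pair_split] at h1
      have e : ∑ w, ((fun w => x (Fin.cons 0 w)) + fun w => x (Fin.cons 1 w)) w * g w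
          = (∑ w, x (Fin.cons 0 w) * g w) + ∑ w, x (Fin.cons 1 w) * g w := by
        simp [add_mul, Finset.sum_add_distrib]
      rw [e]; exact h1
  · rintro ⟨h0, h1⟩ y hy
    obtain ⟨a, ha, c, hc, rfl⟩ := Lmod_succ_decomp hy
    rw [pair_split]
    have e : (∑ w, x (Fin.cons 0 w) * (a + c) w) + ∑ w, x (Fin.cons 1 w) * c w
        = (∑ w, x (Fin.cons 0 w) * a w)
          + ∑ w, ((fun w => x (Fin.cons 0 w)) + fun w => x (Fin.cons 1 w)) w * c w := by
      simp only [Pi.add_apply, mul_add, add_mul, Finset.sum_add_distrib]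
      ring
    rw [e]
    exact (h0 a ha).add (h1 c hc)


lemma gen_zero_eq (t : ℤ) (S : Finset (Fin 0)) :
    gen 0 t S = fun _ => (2:ℝ) ^ (t / 2) := by
  have hS : S = ∅ := Finset.eq_empty_of_isEmpty S
  subst hS
  funext v
  rw [gen, if_pos (fun i _ => i.elim0)]
  norm_num

lemma range_gen_zero (t : ℤ) :
    Set.range (gen 0 t) = {(fun _ => (2:ℝ) ^ (t / 2) : (Fin 0 → ZMod 2) → ℝ)} := by
  ext x
  constructor
  · rintro ⟨S, rfl⟩; exact gen_zero_eq t S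
  · rintro rfl; exact ⟨∅, gen_zero_eq t ∅⟩

lemma sum_fin0 (f : (Fin 0 → ZMod 2) → ℝ) (v : Fin 0 → ZMod 2) : ∑ u, f u = f v := by
  rw [show (Finset.univ : Finset (Fin 0 → ZMod 2)) = {v} from
    Finset.eq_singleton_iff_unique_mem.mpr ⟨Finset.mem_univ v, fun u _ => Subsingleton.elim u v⟩,
    Finset.sum_singleton]

lemma dual_base (t : ℤ) : dualL (Lmod 0 t) = Lmod 0 (1 - t) := by
  have hexp : ((1:ℤ) - t) / 2 = -(t / 2) := by omega
  ext x
  rw [Lmod, mem_dualL_span, range_gen_zero, Lmod, range_gen_zero, hexp,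
    Submodule.mem_span_singleton]
  constructor
  · intro h
    obtain ⟨k, hk⟩ := h _ rfl
    refine ⟨k, funext fun v => ?_⟩
    rw [sum_fin0 _ v] at hk
    rw [Pi.smul_apply, zsmul_eq_mul, zpow_neg,
      mul_inv_eq_iff_eq_mul₀ (zpow_ne_zero _ (two_ne_zero (α := ℝ)))]
    exact hk.symm
  · rintro ⟨k, rfl⟩ y hy
    rw [Set.mem_singleton_iff] at hy
    subst hy
    rw [sum_fin0 _ (fun i => i.elim0)]
    refine ⟨k, ?_⟩
    rw [Pi.smul_apply, zsmul_eq_mul, zpow_neg, mul_assoc,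
      inv_mul_cancel₀ (zpow_ne_zero _ two_ne_zero), mul_one]

theorem dual_Lmod (n : ℕ) : ∀ t : ℤ, dualL (Lmod n t) = Lmod n ((n:ℤ) + 1 - t) := by
  induction n with
  | zero =>
      intro t
      rw [dual_base t]
      norm_num
  | succ n ih =>
      intro t
      ext x
      rw [mem_dual_succ_iff, ih, ih, mem_Lmod_succ_iff,
        show ((n:ℤ) + 1 - (t-1)) = ((n:ℤ) + 1 - t) + 1 from by ring,
        show (((n+1:ℕ)):ℤ) + 1 - t = ((n:ℤ) + 1 - t) + 1 from by push_cast; ring,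
        show (((n:ℤ) + 1 - t) + 1) - 1 = ((n:ℤ) + 1 - t) from by ring]
      generalize (n:ℤ) + 1 - t = s
      constructor
      · rintro ⟨h0, h01⟩
        have h01' : ((fun w => x (Fin.cons 0 w)) + fun w => x (Fin.cons 1 w)) ∈ Lmod n s :=
          Lmod_le (by omega) h01
        have hx1 : (fun w => x (Fin.cons 1 w)) ∈ Lmod n s := by
          have h := Submodule.sub_mem _ h01' h0
          rwa [add_sub_cancel_left] at h
        refine ⟨hx1, ?_⟩
        have h2 : (2:ℝ) • (fun w => x (Fin.cons 0 w)) ∈ Lmod n (s + 1) :=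
          Lmod_le (by omega) (two_smul_mem h0)
        have h := Submodule.sub_mem _ h2 h01
        have heq : (2:ℝ) • (fun w => x (Fin.cons 0 w))
            - ((fun w => x (Fin.cons 0 w)) + fun w => x (Fin.cons 1 w))
            = ((fun w => x (Fin.cons 0 w)) - fun w => x (Fin.cons 1 w)) := by
          rw [two_smul]; abel
        rwa [heq] at h
      · rintro ⟨h1, hd⟩
        have hd' : ((fun w => x (Fin.cons 0 w)) - fun w => x (Fin.cons 1 w)) ∈ Lmod n s :=
          Lmod_le (by omega) hd
        have h0 : (fun w => x (Fin.cons 0 w)) ∈ Lmod n s := by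
          have h := Submodule.add_mem _ hd' h1
          rwa [sub_add_cancel] at h
        refine ⟨h0, ?_⟩
        have h2 : (2:ℝ) • (fun w => x (Fin.cons 1 w)) ∈ Lmod n (s + 1) :=
          Lmod_le (by omega) (two_smul_mem h1)
        have h := Submodule.add_mem _ hd h2
        have heq : ((fun w => x (Fin.cons 0 w)) - fun w => x (Fin.cons 1 w))
            + (2:ℝ) • (fun w => x (Fin.cons 1 w))
            = ((fun w => x (Fin.cons 0 w)) + fun w => x (Fin.cons 1 w)) := by
          rw [two_smul]; abel
        rwa [heq] at h


section Transfer

variable {m : ℕ} {V : Type*} [AddCommGroup V] [Module (ZMod 2) V] [Fintype V]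
  (b : Module.Basis (Fin (2 * m)) (ZMod 2) V)

lemma mem_span_iff (S : Finset (Fin (2 * m))) (v : V) :
    v ∈ Submodule.span (ZMod 2) (⇑b '' ↑S) ↔ ∀ i ∉ S, b.equivFun v i = 0 := by
  rw [Module.Basis.mem_span_image]
  constructor
  · intro h i hi
    rw [Module.Basis.equivFun_apply]
    by_contra hne
    exact hi (h (Finsupp.mem_support_iff.mpr hne))
  · intro h i hi
    rw [Finset.mem_coe, Finsupp.mem_support_iff] at hi
    by_contra hS
    have h2 := h i hS
    rw [Module.Basis.equivFun_apply] at h2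
    exact hi h2

open Classical in
lemma gen_corr (S : Finset (Fin (2 * m))) (t : ℤ) (E : ℕ)
    (hE : (E : ℤ) = (t - (S.card : ℤ)) / 2) :
    (fun v : V => if v ∈ Submodule.span (ZMod 2) (⇑b '' ↑S) then (2:ℝ) ^ E else 0)
      = gen (2 * m) t S ∘ ⇑b.equivFun := by
  funext v
  rw [Function.comp_apply, gen, if_congr (mem_span_iff b S v) rfl rfl]
  have hval : ((2:ℝ) ^ E) = (2:ℝ) ^ ((t - (S.card : ℤ)) / 2) := by
    rw [← zpow_natCast (2:ℝ), hE]
  rw [hval]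

lemma card_le_2m (S : Finset (Fin (2 * m))) : S.card ≤ 2 * m := by
  have := Finset.card_le_univ S
  simpa using this

open Classical in
lemma BWlat_iff (x : V → ℝ) :
    x ∈ BWlat b ↔ (x ∘ ⇑b.equivFun.symm) ∈ Lmod (2 * m) (((2 * m : ℕ) : ℤ) + 1) := by
  constructor
  · intro hx
    induction hx using Submodule.span_induction with
    | mem y hy =>
        obtain ⟨r, hr, U, ⟨S, hScard, rfl⟩, rfl⟩ := hy
        have hc := gen_corr b S (((2 * m : ℕ) : ℤ) + 1) ((2 * m - r + 1) / 2)
          (by rw [← hScard] at hr ⊢; omega)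
        have : (fun v : V => if v ∈ Submodule.span (ZMod 2) (⇑b '' ↑S)
              then (2:ℝ) ^ ((2 * m - r + 1) / 2) else 0) ∘ ⇑b.equivFun.symm
            = gen (2 * m) (((2 * m : ℕ) : ℤ) + 1) S := by
          rw [hc]
          funext w
          show gen _ _ S (b.equivFun (b.equivFun.symm w)) = _
          rw [LinearEquiv.apply_symm_apply]
        rw [this]
        exact Submodule.subset_span ⟨S, rfl⟩
    | zero => exact Submodule.zero_mem _
    | add a c _ _ ha hc => exact Submodule.add_mem _ ha hc
    | smul k a _ ha => exact Submodule.smul_mem _ _ ha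
  · intro hx
    have key : ∀ y, y ∈ Lmod (2 * m) (((2 * m : ℕ) : ℤ) + 1) → y ∘ ⇑b.equivFun ∈ BWlat b := by
      intro y hy
      induction hy using Submodule.span_induction with
      | mem z hz =>
          obtain ⟨S, rfl⟩ := hz
          have hc := gen_corr b S (((2 * m : ℕ) : ℤ) + 1) ((2 * m - S.card + 1) / 2)
            (by have := card_le_2m S; omega)
          rw [← hc]
          exact Submodule.subset_span
            ⟨S.card, card_le_2m S, Submodule.span (ZMod 2) (⇑b '' ↑S), ⟨S, rfl, rfl⟩, rfl⟩
      | zero => exact Submodule.zero_mem _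
      | add a c _ _ ha hc => exact Submodule.add_mem _ ha hc
      | smul k a _ ha => exact Submodule.smul_mem _ _ ha
    have h2 := key _ hx
    have : (x ∘ ⇑b.equivFun.symm) ∘ ⇑b.equivFun = x := by
      funext v
      show x (b.equivFun.symm (b.equivFun v)) = x v
      rw [LinearEquiv.symm_apply_apply]
    rwa [this] at h2

open Classical in
lemma BWdual_iff (x : V → ℝ) :
    x ∈ BWdual b ↔ (x ∘ ⇑b.equivFun.symm) ∈ Lmod (2 * m) ((2 * m : ℕ) : ℤ) := by
  constructor
  · intro hx
    induction hx using Submodule.span_induction with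
    | mem y hy =>
        obtain ⟨r, hr, U, ⟨S, hScard, rfl⟩, rfl⟩ := hy
        have hc := gen_corr b S ((2 * m : ℕ) : ℤ) ((2 * m - r) / 2)
          (by rw [← hScard] at hr ⊢; omega)
        have : (fun v : V => if v ∈ Submodule.span (ZMod 2) (⇑b '' ↑S)
              then (2:ℝ) ^ ((2 * m - r) / 2) else 0) ∘ ⇑b.equivFun.symm
            = gen (2 * m) ((2 * m : ℕ) : ℤ) S := by
          rw [hc]
          funext w
          show gen _ _ S (b.equivFun (b.equivFun.symm w)) = _
          rw [LinearEquiv.apply_symm_apply]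
        rw [this]
        exact Submodule.subset_span ⟨S, rfl⟩
    | zero => exact Submodule.zero_mem _
    | add a c _ _ ha hc => exact Submodule.add_mem _ ha hc
    | smul k a _ ha => exact Submodule.smul_mem _ _ ha
  · intro hx
    have key : ∀ y, y ∈ Lmod (2 * m) ((2 * m : ℕ) : ℤ) → y ∘ ⇑b.equivFun ∈ BWdual b := by
      intro y hy
      induction hy using Submodule.span_induction with
      | mem z hz =>
          obtain ⟨S, rfl⟩ := hz
          have hc := gen_corr b S ((2 * m : ℕ) : ℤ) ((2 * m - S.card) / 2)
            (by have := card_le_2m S; omega)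
          rw [← hc]
          exact Submodule.subset_span
            ⟨S.card, card_le_2m S, Submodule.span (ZMod 2) (⇑b '' ↑S), ⟨S, rfl, rfl⟩, rfl⟩
      | zero => exact Submodule.zero_mem _
      | add a c _ _ ha hc => exact Submodule.add_mem _ ha hc
      | smul k a _ ha => exact Submodule.smul_mem _ _ ha
    have h2 := key _ hx
    have : (x ∘ ⇑b.equivFun.symm) ∘ ⇑b.equivFun = x := by
      funext v
      show x (b.equivFun.symm (b.equivFun v)) = x v
      rw [LinearEquiv.symm_apply_apply]
    rwa [this] at h2

lemma pair_corr (x y : V → ℝ) :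
    ∑ v : V, x v * y v
      = ∑ w, (x ∘ ⇑b.equivFun.symm) w * (y ∘ ⇑b.equivFun.symm) w := by
  refine Fintype.sum_equiv b.equivFun.toEquiv _ _ fun v => ?_
  show x v * y v = x (b.equivFun.symm (b.equivFun v)) * y (b.equivFun.symm (b.equivFun v))
  rw [LinearEquiv.symm_apply_apply]

end Transfer

end BW15



/-- With respect to the inner product `⟨x,y⟩ = 2^{-m} Σ_{v∈V} x_v y_v` on
`ℝ^V`, the dual lattice of the Barnes-Wall lattice `BW` equals `BW'`. -/
theorem stmt15 (m : ℕ) (hm : 1 ≤ m) (V : Type*) [AddCommGroup V] [Module (ZMod 2) V]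
    [Fintype V] (b : Module.Basis (Fin (2 * m)) (ZMod 2) V) :
    {x : V → ℝ | ∀ y ∈ BWlat b, ∃ k : ℤ, ((2 : ℝ) ^ m)⁻¹ * ∑ v, x v * y v = (k : ℝ)}
      = (BWdual b : Set (V → ℝ)) := by
  classical
  have key : BW15.dualL (BW15.Lmod (2 * m) (((2 * m : ℕ) : ℤ) + 1)) = BW15.Lmod (2 * m) 0 := by
    rw [BW15.dual_Lmod (2 * m) (((2 * m : ℕ) : ℤ) + 1), sub_self]
  have hsum : ∀ z y : (Fin (2 * m) → ZMod 2) → ℝ,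
      (∑ w, (((2:ℝ) ^ m)⁻¹ • z) w * y w) = ((2:ℝ) ^ m)⁻¹ * ∑ w, z w * y w := by
    intro z y
    simp only [Pi.smul_apply, smul_eq_mul, Finset.mul_sum, mul_assoc]
  ext x
  simp only [Set.mem_setOf_eq, SetLike.mem_coe]
  constructor
  · intro h
    rw [BW15.BWdual_iff]
    have hd : ((2:ℝ) ^ m)⁻¹ • (x ∘ ⇑b.equivFun.symm)
        ∈ BW15.dualL (BW15.Lmod (2 * m) (((2 * m : ℕ) : ℤ) + 1)) := by
      intro y hy
      have hy2 : (y ∘ ⇑b.equivFun) ∘ ⇑b.equivFun.symm = y := by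
        funext w
        show y (b.equivFun (b.equivFun.symm w)) = y w
        rw [LinearEquiv.apply_symm_apply]
      have hy' : (y ∘ ⇑b.equivFun) ∈ BWlat b := by
        rw [BW15.BWlat_iff, hy2]
        exact hy
      obtain ⟨k, hk⟩ := h (y ∘ ⇑b.equivFun) hy'
      refine ⟨k, ?_⟩
      rw [hsum, ← hk]
      congr 1
      rw [BW15.pair_corr b x (y ∘ ⇑b.equivFun), hy2]
    rw [key] at hd
    have h2 := (BW15.pow_smul_mem_iff m).mp hd
    rwa [show (0 : ℤ) + 2 * (m : ℕ) = ((2 * m : ℕ) : ℤ) from by push_cast; ring] at h2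
  · intro h y hy
    have hx : x ∘ ⇑b.equivFun.symm ∈ BW15.Lmod (2 * m) ((2 * m : ℕ) : ℤ) :=
      (BW15.BWdual_iff b x).mp h
    have hx0 : ((2:ℝ) ^ m)⁻¹ • (x ∘ ⇑b.equivFun.symm) ∈ BW15.Lmod (2 * m) 0 := by
      rw [BW15.pow_smul_mem_iff m,
        show (0 : ℤ) + 2 * (m : ℕ) = ((2 * m : ℕ) : ℤ) from by push_cast; ring]
      exact hx
    rw [← key] at hx0
    have hy' : y ∘ ⇑b.equivFun.symm ∈ BW15.Lmod (2 * m) (((2 * m : ℕ) : ℤ) + 1) :=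
      (BW15.BWlat_iff b y).mp hy
    obtain ⟨k, hk⟩ := hx0 _ hy'
    refine ⟨k, ?_⟩
    rw [← hk, hsum, BW15.pair_corr b x y]
end

section
/- Let m ≥ 1, 0 ≤ r < 2m and I ⊆ M_r. Then dim_{𝔽₂} C(r,I,2m) = Σ_{ℓ=0}^{r−1} binom(2m,ℓ) + Σ_{k∈I} |Θ^{(r)}_k|. -/
/-- `Z_r = {ζ^u : 0 < u ≤ 4^m - 1, wt₂(u) ≤ 2m - 1 - r}` (for `r ∈ ℤ`, `r ≥ -1`). -/
def Zset {K : Type*} [Monoid K] (m : ℕ) (ζ : K) (r : ℤ) : Set K :=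
  {z | ∃ u : ℕ, 0 < u ∧ u ≤ 4 ^ m - 1 ∧ (wt2 m u : ℤ) ≤ 2 * m - 1 - r ∧ z = ζ ^ u}

/-- `Z_{r,I} = Z_{r-1} \ ∪_{k∈I} Θ^{(r)}_k`. -/
def ZrI {K : Type*} [Monoid K] (m : ℕ) (ζ : K) (r : ℕ) (I : Set ℕ) : Set K :=
  Zset m ζ ((r : ℤ) - 1) \ ⋃ k ∈ I, (ThetaR m ζ r ∩ ThetaK m ζ k)

/-- `M_r`: equal to `M₊ = {0 ≤ k ≤ m : m-k even}` for `r` even and to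
`M₋ = {0 ≤ k ≤ m : m-k odd}` for `r` odd. -/
def Mset (m r : ℕ) : Set ℕ := {k | k ≤ m ∧ (Even (m - k) ↔ Even r)}

/-- `M₋ = {0 ≤ k ≤ m : m-k odd}`. -/
def Mminus (m : ℕ) : Set ℕ := {k | k ≤ m ∧ Odd (m - k)}

/-- The cyclic code `C(r,I,2m)* ≤ 𝔽₂^{4^m-1}` with zero set `Z_{r,I}`. -/
def CstarCode {K : Type*} [CommRing K] [Algebra (ZMod 2) K] (m : ℕ) (ζ : K) (r : ℕ)
    (I : Set ℕ) : Submodule (ZMod 2) (Fin (4 ^ m - 1) → ZMod 2) where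
  carrier := {c | ∀ z ∈ ZrI m ζ r I, ∑ i, algebraMap (ZMod 2) K (c i) * z ^ (i : ℕ) = 0}
  zero_mem' := by intro z hz; simp
  add_mem' := by
    intro a b ha hb z hz
    have h1 := ha z hz
    have h2 := hb z hz
    calc ∑ i, algebraMap (ZMod 2) K ((a + b) i) * z ^ (i : ℕ)
        = ∑ i, (algebraMap (ZMod 2) K (a i) * z ^ (i : ℕ)
            + algebraMap (ZMod 2) K (b i) * z ^ (i : ℕ)) := by
          refine Finset.sum_congr rfl fun i _ => ?_
          rw [Pi.add_apply, map_add, add_mul]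
      _ = 0 := by rw [Finset.sum_add_distrib, h1, h2, add_zero]
  smul_mem' := by
    intro c a ha z hz
    have h1 := ha z hz
    calc ∑ i, algebraMap (ZMod 2) K ((c • a) i) * z ^ (i : ℕ)
        = algebraMap (ZMod 2) K c
            * ∑ i, algebraMap (ZMod 2) K (a i) * z ^ (i : ℕ) := by
          rw [Finset.mul_sum]
          refine Finset.sum_congr rfl fun i _ => ?_
          rw [Pi.smul_apply, smul_eq_mul, map_mul, mul_assoc]
      _ = 0 := by rw [h1, mul_zero]

/-- The extended code `C(r,I,2m) ≤ 𝔽₂^{4^m}` of `C(r,I,2m)*`, obtained by appending to each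
codeword the coordinate `Σ_i c_i`. -/
def CextCode {K : Type*} [CommRing K] [Algebra (ZMod 2) K] (m : ℕ) (ζ : K) (r : ℕ)
    (I : Set ℕ) : Submodule (ZMod 2) (Fin (4 ^ m - 1 + 1) → ZMod 2) where
  carrier := {d | Fin.init d ∈ CstarCode m ζ r I ∧ d (Fin.last _) = ∑ i, Fin.init d i}
  zero_mem' := by
    refine ⟨(CstarCode m ζ r I).zero_mem, by simp [Fin.init]⟩
  add_mem' := by
    intro a b ha hb
    refine ⟨add_mem ha.1 hb.1, ?_⟩
    show (a + b) (Fin.last _) = _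
    rw [Pi.add_apply, ha.2, hb.2, ← Finset.sum_add_distrib]
    rfl
  smul_mem' := by
    intro c a ha
    refine ⟨Submodule.smul_mem _ c ha.1, ?_⟩
    show (c • a) (Fin.last _) = _
    rw [Pi.smul_apply, ha.2, Finset.smul_sum]
    rfl

/-- The Hamming weight of a vector. -/
def hwt {n : ℕ} {R : Type*} [Zero R] [DecidableEq R] (c : Fin n → R) : ℕ :=
  (Finset.univ.filter fun i => c i ≠ 0).card

namespace S17

lemma sum_range_two_pow (a : ℕ) : ∑ i ∈ Finset.range a, 2 ^ i = 2 ^ a - 1 := by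
  induction a with
  | zero => simp
  | succ a ih =>
    rw [Finset.sum_range_succ, ih]
    have := Nat.one_le_two_pow (n := a)
    omega

lemma testBit_sum_two_pow (s : Finset ℕ) (j : ℕ) :
    (∑ i ∈ s, 2 ^ i).testBit j = decide (j ∈ s) := by
  induction s using Finset.induction_on_max with
  | empty => simp
  | insert a s ha ih =>
    have has : a ∉ s := fun h => lt_irrefl a (ha a h)
    have hb : ∑ i ∈ s, 2 ^ i < 2 ^ a := by
      calc ∑ i ∈ s, 2 ^ i ≤ ∑ i ∈ Finset.range a, 2 ^ i :=
            Finset.sum_le_sum_of_subset (fun x hx => Finset.mem_range.2 (ha x hx))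
        _ < 2 ^ a := by rw [sum_range_two_pow]; exact Nat.sub_lt (Nat.pow_pos two_pos) one_pos
    rw [Finset.sum_insert has, show (2:ℕ) ^ a + ∑ i ∈ s, 2 ^ i = 2 ^ a * 1 + ∑ i ∈ s, 2 ^ i by ring,
      Nat.testBit_two_pow_mul_add 1 hb j]
    by_cases hj : j < a
    · rw [if_pos hj, ih]
      have : j ≠ a := by omega
      simp [Finset.mem_insert, this]
    · rw [if_neg hj]
      by_cases hja : j = a
      · subst hja
        simp [Nat.testBit_two_pow_self, Nat.sub_self]
      · have h1 : j - a ≠ 0 := by omega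
        have : (1 : ℕ).testBit (j - a) = false := by
          apply Nat.testBit_lt_two_pow
          have : 1 ≤ j - a := by omega
          calc (1:ℕ) < 2 ^ 1 := by norm_num
            _ ≤ 2 ^ (j - a) := Nat.pow_le_pow_right two_pos this
        rw [this]
        have hjs : j ∉ s := fun h => hj (ha j h)
        simp [Finset.mem_insert, hja, hjs]


lemma card_filter_wt (w c : ℕ) :
    ((Finset.range (2 ^ w)).filter fun u =>
        ((Finset.range w).filter fun i => u.testBit i).card = c).card = Nat.choose w c := by
  have hpc := Finset.card_powersetCard c (Finset.range w)
  rw [Finset.card_range] at hpc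
  rw [← hpc]
  apply Finset.card_bij (fun u _ => (Finset.range w).filter fun i => u.testBit i)
  · intro u hu
    rw [Finset.mem_filter] at hu
    exact Finset.mem_powersetCard.2 ⟨Finset.filter_subset _ _, hu.2⟩
  · intro u hu v hv h
    rw [Finset.mem_filter, Finset.mem_range] at hu hv
    apply Nat.eq_of_testBit_eq
    intro i
    by_cases hi : i < w
    · have := Finset.ext_iff.1 h i
      simp only [Finset.mem_filter, Finset.mem_range, hi, true_and] at this
      by_cases h1 : u.testBit i
      · rw [h1, (this.1 h1)]
      · rcases Bool.eq_false_iff.2 h1 with _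
        have h2 : v.testBit i ≠ true := fun hv' => h1 (this.2 hv')
        simp only [Bool.not_eq_true] at *
        rw [h1, h2]
    · rw [Nat.testBit_lt_two_pow, Nat.testBit_lt_two_pow]
      · exact lt_of_lt_of_le hv.1 (Nat.pow_le_pow_right two_pos (by omega))
      · exact lt_of_lt_of_le hu.1 (Nat.pow_le_pow_right two_pos (by omega))
  · intro s hs
    rw [Finset.mem_powersetCard] at hs
    refine ⟨∑ i ∈ s, 2 ^ i, ?_, ?_⟩
    · rw [Finset.mem_filter, Finset.mem_range]
      constructor
      · calc ∑ i ∈ s, 2 ^ i ≤ ∑ i ∈ Finset.range w, 2 ^ i :=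
              Finset.sum_le_sum_of_subset hs.1
          _ < 2 ^ w := by
              rw [sum_range_two_pow]
              exact Nat.sub_lt (Nat.pow_pos two_pos) one_pos
      · rw [← hs.2]
        congr 1
        ext i
        simp only [Finset.mem_filter, Finset.mem_range, testBit_sum_two_pow, decide_eq_true_eq]
        exact ⟨fun h => h.2, fun h => ⟨Finset.mem_range.1 (hs.1 h), h⟩⟩
    · ext i
      simp only [Finset.mem_filter, Finset.mem_range, testBit_sum_two_pow, decide_eq_true_eq]
      exact ⟨fun h => h.2, fun h => ⟨Finset.mem_range.1 (hs.1 h), h⟩⟩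

end S17

namespace S17R

def rot (m u : ℕ) : ℕ := 2 * (u % 2 ^ (2 * m - 1)) + u / 2 ^ (2 * m - 1)

variable {m u : ℕ}

lemma hd2 (hm : 1 ≤ m) : 2 ^ (2 * m) = 2 * 2 ^ (2 * m - 1) := by
  calc 2 ^ (2 * m) = 2 ^ (2 * m - 1 + 1) := by rw [show 2 * m - 1 + 1 = 2 * m by omega]
    _ = 2 * 2 ^ (2 * m - 1) := by rw [pow_succ, mul_comm]

lemma div_le_one (hm : 1 ≤ m) (hu : u < 2 ^ (2 * m)) : u / 2 ^ (2 * m - 1) ≤ 1 := by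
  have hdpos : 0 < 2 ^ (2 * m - 1) := Nat.pow_pos two_pos
  have h2 : u / 2 ^ (2 * m - 1) < 2 := by
    rw [Nat.div_lt_iff_lt_mul hdpos]
    rw [hd2 hm] at hu
    omega
  omega

lemma rot_lt (hm : 1 ≤ m) (hu : u < 2 ^ (2 * m)) : rot m u < 2 ^ (2 * m) := by
  have h := hd2 hm
  have h1 := div_le_one hm hu
  have h2 := Nat.mod_lt u (show 0 < 2 ^ (2 * m - 1) from Nat.pow_pos two_pos)
  unfold rot; omega

lemma rot_pos (hm : 1 ≤ m) (hu0 : 0 < u) (hu : u < 2 ^ (2 * m)) : 0 < rot m u := by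
  have h1 := div_le_one hm hu
  have h2 := Nat.div_add_mod u (2 ^ (2 * m - 1))
  unfold rot
  rcases Nat.le_one_iff_eq_zero_or_eq_one.1 h1 with h3 | h3 <;> rw [h3] at h2 ⊢ <;> omega

lemma two_mul_eq (hm : 1 ≤ m) (hu : u < 2 ^ (2 * m)) :
    2 * u = rot m u + (2 ^ (2 * m) - 1) * (u / 2 ^ (2 * m - 1)) := by
  have h := hd2 hm
  have h1 := div_le_one hm hu
  have h2 := Nat.div_add_mod u (2 ^ (2 * m - 1))
  unfold rot
  rcases Nat.le_one_iff_eq_zero_or_eq_one.1 h1 with h3 | h3 <;> rw [h3] at h2 ⊢ <;> omega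

lemma rot_testBit_zero (hm : 1 ≤ m) (hu : u < 2 ^ (2 * m)) :
    (rot m u).testBit 0 = u.testBit (2 * m - 1) := by
  have h1 := div_le_one hm hu
  have h : rot m u = 2 ^ 1 * (u % 2 ^ (2 * m - 1)) + u / 2 ^ (2 * m - 1) := by unfold rot; ring
  rw [h, Nat.testBit_two_pow_mul_add _ (show u / 2 ^ (2*m-1) < 2 ^ 1 by omega), if_pos one_pos,
    Nat.testBit_eq_decide_div_mod_eq, Nat.testBit_eq_decide_div_mod_eq]
  simp only [pow_zero, Nat.div_one]

lemma rot_testBit_succ (hm : 1 ≤ m) (hu : u < 2 ^ (2 * m)) (j : ℕ) :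
    (rot m u).testBit (j + 1) = (decide (j < 2 * m - 1) && u.testBit j) := by
  have h1 := div_le_one hm hu
  have h : rot m u = 2 ^ 1 * (u % 2 ^ (2 * m - 1)) + u / 2 ^ (2 * m - 1) := by unfold rot; ring
  rw [h, Nat.testBit_two_pow_mul_add _ (show u / 2 ^ (2*m-1) < 2 ^ 1 by omega),
    if_neg (by omega), Nat.add_sub_cancel, Nat.testBit_mod_two_pow]

lemma wt2_rot (hm : 1 ≤ m) (hu : u < 2 ^ (2 * m)) : wt2 m (rot m u) = wt2 m u := by
  unfold wt2
  refine (Finset.card_bij (fun i _ => if i = 2 * m - 1 then 0 else i + 1) ?_ ?_ ?_).symm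
  · intro i hi
    rw [Finset.mem_filter, Finset.mem_range] at hi ⊢
    by_cases h : i = 2 * m - 1
    · subst h
      rw [if_pos rfl]
      exact ⟨by omega, by rw [rot_testBit_zero hm hu]; exact hi.2⟩
    · rw [if_neg h]
      refine ⟨by omega, ?_⟩
      rw [rot_testBit_succ hm hu]
      simp [show i < 2 * m - 1 by omega, hi.2]
  · intro i hi i' hi' hh
    rw [Finset.mem_filter, Finset.mem_range] at hi hi'
    split_ifs at hh <;> omega
  · intro j hj
    rw [Finset.mem_filter, Finset.mem_range] at hj
    rcases Nat.eq_zero_or_pos j with h0 | h0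
    · subst h0
      refine ⟨2 * m - 1, Finset.mem_filter.2 ⟨Finset.mem_range.2 (by omega), ?_⟩, by simp⟩
      rw [← rot_testBit_zero hm hu]; exact hj.2
    · have key := rot_testBit_succ hm hu (j - 1)
      rw [show j - 1 + 1 = j by omega] at key
      rw [key] at hj
      simp only [Bool.and_eq_true, decide_eq_true_eq] at hj
      have hlt : j - 1 < 2 * m - 1 := hj.2.1
      refine ⟨j - 1, Finset.mem_filter.2 ⟨Finset.mem_range.2 (by omega), hj.2.2⟩, ?_⟩
      rw [if_neg (by omega)]
      omega

lemma Ofun_rot (hm : 1 ≤ m) (hu : u < 2 ^ (2 * m)) : Ofun m (rot m u) = Efun m u := by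
  unfold Ofun Efun
  congr 1
  apply Finset.filter_congr
  intro i hi
  rw [Finset.mem_range] at hi
  rw [rot_testBit_succ hm hu]
  simp [show 2 * i < 2 * m - 1 by omega]

lemma Efun_rot (hm : 1 ≤ m) (hu : u < 2 ^ (2 * m)) : Efun m (rot m u) = Ofun m u := by
  unfold Ofun Efun
  refine (Finset.card_bij (fun i _ => if i = m - 1 then 0 else i + 1) ?_ ?_ ?_).symm
  · intro i hi
    rw [Finset.mem_filter, Finset.mem_range] at hi ⊢
    by_cases h : i = m - 1
    · subst h
      rw [if_pos rfl]
      refine ⟨by omega, ?_⟩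
      rw [mul_zero, rot_testBit_zero hm hu, show 2 * m - 1 = 2 * (m-1) + 1 by omega]
      exact hi.2
    · rw [if_neg h]
      refine ⟨by omega, ?_⟩
      rw [show 2 * (i+1) = (2*i+1) + 1 by ring, rot_testBit_succ hm hu]
      simp [show 2*i+1 < 2 * m - 1 by omega, hi.2]
  · intro i hi i' hi' hh
    rw [Finset.mem_filter, Finset.mem_range] at hi hi'
    split_ifs at hh <;> omega
  · intro j hj
    rw [Finset.mem_filter, Finset.mem_range] at hj
    rcases Nat.eq_zero_or_pos j with h0 | h0
    · subst h0
      refine ⟨m - 1, Finset.mem_filter.2 ⟨Finset.mem_range.2 (by omega), ?_⟩, by simp⟩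
      rw [show 2 * (m-1) + 1 = 2 * m - 1 by omega, ← rot_testBit_zero hm hu]
      rw [mul_zero] at hj
      exact hj.2
    · have key := rot_testBit_succ hm hu (2 * j - 1)
      rw [show 2 * j - 1 + 1 = 2 * j by omega] at key
      rw [key] at hj
      simp only [Bool.and_eq_true, decide_eq_true_eq] at hj
      refine ⟨j - 1, Finset.mem_filter.2 ⟨Finset.mem_range.2 (by omega), ?_⟩, ?_⟩
      · rw [show 2 * (j - 1) + 1 = 2 * j - 1 by omega]
        exact hj.2.2
      · rw [if_neg (by omega)]
        omega

end S17R

namespace S17P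

open Polynomial

variable {K : Type*} [Field K] [Algebra (ZMod 2) K]

lemma code_finrank (n : ℕ) (Z : Finset K)
    (hZsq : ∀ z ∈ Z, z ^ 2 ∈ Z) (hdn : Z.card ≤ n)
    (N : Submodule (ZMod 2) (Fin n → ZMod 2))
    (hN : ∀ c, c ∈ N ↔ ∀ z ∈ Z, ∑ i, algebraMap (ZMod 2) K (c i) * z ^ (i : ℕ) = 0) :
    Module.finrank (ZMod 2) N = n - Z.card := by
  classical
  set φ := algebraMap (ZMod 2) K with hφ
  have hφinj : Function.Injective φ := (algebraMap (ZMod 2) K).injective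
  haveI : CharP K 2 := charP_of_injective_algebraMap hφinj 2
  haveI : ExpChar K 2 := ExpChar.prime Nat.prime_two
  set d := Z.card with hdef
  -- the polynomial g
  set g : K[X] := ∏ z ∈ Z, (X - C z) with hg
  have hgmonic : g.Monic := monic_prod_of_monic _ _ fun z _ => monic_X_sub_C z
  have hgdeg : g.natDegree = d := by
    rw [hg, natDegree_prod _ _ fun z _ => X_sub_C_ne_zero z]
    simp [natDegree_X_sub_C, hdef]
  -- squaring is injective on K
  have h2K : (2 : K) = 0 := by
    have := CharP.cast_eq_zero K 2; exact_mod_cast this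
  have hsqinj : Function.Injective (fun x : K => x ^ 2) := by
    intro x y h
    simp only at h
    have h2 : (x - y) ^ 2 = 0 := by linear_combination h + (y^2 - x*y) * h2K
    exact sub_eq_zero.1 (pow_eq_zero_iff (n := 2) (by norm_num) |>.1 h2)
  -- g is fixed by frobenius
  have hfrob : g.map (frobenius K 2) = g := by
    rw [hg, Polynomial.map_prod]
    refine Finset.prod_bij (fun z _ => z ^ 2) ?_ ?_ ?_ ?_
    · intro z hz; exact hZsq z hz
    · intro z hz z' hz' h; exact hsqinj h
    · intro w hw
      obtain ⟨z, hz, hzw⟩ := Finset.surj_on_of_inj_on_of_card_le (fun z (_ : z ∈ Z) => z ^ 2)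
        (fun z hz => hZsq z hz) (fun a b _ _ h => hsqinj h) (le_refl _) w hw
      exact ⟨z, hz, hzw.symm⟩
    · intro z hz
      simp [frobenius_def]
  -- lift g to ZMod 2
  have hcoeff : ∀ i, g.coeff i ∈ Set.range φ := by
    intro i
    have h2 : (g.coeff i) ^ 2 = g.coeff i := by
      conv_rhs => rw [← hfrob]
      rw [coeff_map, frobenius_def]
    have : g.coeff i * (g.coeff i - 1) = 0 := by linear_combination h2
    rcases mul_eq_zero.1 this with h | h
    · exact ⟨0, by simp [h]⟩
    · exact ⟨1, by rw [map_one]; rw [sub_eq_zero] at h; exact h.symm⟩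
  have hglifts : g ∈ Polynomial.lifts (φ : ZMod 2 →+* K) := by
    rw [lifts_iff_coeff_lifts]; exact hcoeff
  obtain ⟨g₀, hg₀map, hg₀deg, hg₀monic⟩ := Polynomial.lifts_and_degree_eq_and_monic hglifts hgmonic
  have hg₀natdeg : g₀.natDegree = d := by
    rw [← hgdeg]
    have := natDegree_map_eq_of_injective hφinj g₀
    rw [← this, hg₀map]
  have hg₀degree : g₀.degree = (d : WithBot ℕ) := by
    rw [Polynomial.degree_eq_natDegree hg₀monic.ne_zero, hg₀natdeg]
  -- the linear map to polynomials of degree < n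
  set L : (Fin n → ZMod 2) →ₗ[ZMod 2] (ZMod 2)[X] :=
    (Polynomial.degreeLT (ZMod 2) n).subtype ∘ₗ
      (Polynomial.degreeLTEquiv (ZMod 2) n).symm.toLinearMap with hL
  have hLmem : ∀ c, L c ∈ Polynomial.degreeLT (ZMod 2) n := fun c =>
    ((Polynomial.degreeLTEquiv (ZMod 2) n).symm c).2
  have hLcoeff : ∀ (c : Fin n → ZMod 2) (i : Fin n), (L c).coeff i = c i := by
    intro c i
    have := (Polynomial.degreeLTEquiv (ZMod 2) n).apply_symm_apply c
    exact congrFun this i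
  have hLcoeff' : ∀ (c : Fin n → ZMod 2) (j : ℕ), n ≤ j → (L c).coeff j = 0 := by
    intro c j hj
    apply Polynomial.coeff_eq_zero_of_degree_lt
    exact lt_of_lt_of_le (Polynomial.mem_degreeLT.1 (hLmem c)) (by exact_mod_cast Nat.cast_le.2 hj)
  have hmapmem : ∀ c, (L c).map (φ : ZMod 2 →+* K) ∈ Polynomial.degreeLT K n := by
    intro c
    rw [Polynomial.mem_degreeLT]
    calc ((L c).map (φ : ZMod 2 →+* K)).degree ≤ (L c).degree := Polynomial.degree_map_le
      _ < n := Polynomial.mem_degreeLT.1 (hLmem c)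
  have hEval : ∀ (c : Fin n → ZMod 2) (z : K),
      ((L c).map (φ : ZMod 2 →+* K)).eval z = ∑ i, φ (c i) * z ^ (i : ℕ) := by
    intro c z
    rw [Polynomial.eval_eq_sum_degreeLTEquiv (hmapmem c) z]
    refine Finset.sum_congr rfl fun i _ => ?_
    congr 1
    show ((L c).map (φ : ZMod 2 →+* K)).coeff i = φ (c i)
    rw [Polynomial.coeff_map, hLcoeff]
  -- divisibility characterization
  have hdvd : ∀ c : Fin n → ZMod 2,
      (∀ z ∈ Z, ∑ i, φ (c i) * z ^ (i : ℕ) = 0) ↔ g₀ ∣ L c := by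
    intro c
    constructor
    · intro h
      rw [← Polynomial.map_dvd_map (φ : ZMod 2 →+* K) hφinj hg₀monic, hg₀map, hg]
      apply Finset.prod_dvd_of_coprime
      · intro a ha b hb hab
        exact Polynomial.isCoprime_X_sub_C_of_isUnit_sub (sub_ne_zero.2 hab).isUnit
      · intro z hz
        rw [Polynomial.dvd_iff_isRoot]
        show Polynomial.eval z _ = 0
        rw [hEval]
        exact h z hz
    · intro h z hz
      have hgd : g ∣ (L c).map (φ : ZMod 2 →+* K) := by
        rw [← hg₀map]; exact Polynomial.map_dvd _ h
      obtain ⟨q, hq⟩ := hgd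
      rw [← hEval, hq, Polynomial.eval_mul, hg, Polynomial.eval_prod,
        Finset.prod_eq_zero hz (by simp), zero_mul]
  -- the remainder map
  set Φ : (Fin n → ZMod 2) →ₗ[ZMod 2] (Fin d → ZMod 2) :=
    LinearMap.pi (fun i : Fin d =>
      Polynomial.lcoeff (ZMod 2) (i : ℕ) ∘ₗ (Polynomial.modByMonicHom g₀) ∘ₗ L) with hΦ
  have hΦapply : ∀ c i, Φ c i = ((L c) %ₘ g₀).coeff (i : ℕ) := fun c i => rfl
  have hkerΦ : ∀ c, Φ c = 0 ↔ g₀ ∣ L c := by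
    intro c
    rw [← Polynomial.modByMonic_eq_zero_iff_dvd hg₀monic]
    constructor
    · intro h
      ext j
      rw [Polynomial.coeff_zero]
      by_cases hjd : j < d
      · have := congrFun h ⟨j, hjd⟩
        rw [hΦapply] at this
        exact this
      · apply Polynomial.coeff_eq_zero_of_degree_lt
        calc ((L c) %ₘ g₀).degree < g₀.degree := Polynomial.degree_modByMonic_lt _ hg₀monic
          _ ≤ (j : WithBot ℕ) := by
              rw [hg₀degree]
              exact_mod_cast (show d ≤ j by omega)
    · intro h
      funext i
      rw [hΦapply, h, Polynomial.coeff_zero]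
      rfl
  -- surjectivity
  have hsurj : Function.Surjective Φ := by
    intro v
    set c : Fin n → ZMod 2 := fun i => if h : (i : ℕ) < d then v ⟨(i : ℕ), h⟩ else 0 with hc
    refine ⟨c, ?_⟩
    have hdegc : (L c).degree < g₀.degree := by
      rw [hg₀degree]
      rw [Polynomial.degree_lt_iff_coeff_zero]
      intro j hj
      have hjd : d ≤ j := by exact_mod_cast hj
      have hjd : d ≤ j := by exact_mod_cast hj
      by_cases hjn : j < n
      · rw [hLcoeff c ⟨j, hjn⟩]
        show (if h : j < d then v ⟨j, h⟩ else 0) = 0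
        exact dif_neg (by omega)
      · exact hLcoeff' c j (by omega)
    have hmod : (L c) %ₘ g₀ = L c := (Polynomial.modByMonic_eq_self_iff hg₀monic).2 hdegc
    funext i
    rw [hΦapply, hmod]
    have hin : (i : ℕ) < n := lt_of_lt_of_le i.2 hdn
    have := hLcoeff c ⟨(i : ℕ), hin⟩
    rw [this, hc]
    simp only [dif_pos i.2]
  -- rank-nullity
  have hkerN : LinearMap.ker Φ = N := by
    ext c
    rw [LinearMap.mem_ker, hN c, hdvd c, hkerΦ c]
  have hrn := LinearMap.finrank_range_add_finrank_ker Φ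
  rw [LinearMap.range_eq_top.2 hsurj, finrank_top, Module.finrank_fin_fun,
    Module.finrank_fin_fun, hkerN] at hrn
  omega

end S17P

namespace S17M

lemma wt2_zero (m : ℕ) : wt2 m 0 = 0 := by simp [wt2, Nat.zero_testBit]

lemma Ofun_zero (m : ℕ) : Ofun m 0 = 0 := by simp [Ofun, Nat.zero_testBit]

lemma Efun_zero (m : ℕ) : Efun m 0 = 0 := by simp [Efun, Nat.zero_testBit]

lemma wt2_top (m : ℕ) : wt2 m (2 ^ (2 * m) - 1) = 2 * m := by
  unfold wt2
  rw [Finset.filter_true_of_mem, Finset.card_range]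
  intro i hi
  rw [Nat.testBit_two_pow_sub_one]
  simpa using Finset.mem_range.1 hi

lemma Ofun_top (m : ℕ) : Ofun m (2 ^ (2 * m) - 1) = m := by
  unfold Ofun
  rw [Finset.filter_true_of_mem, Finset.card_range]
  intro i hi
  have := Finset.mem_range.1 hi
  rw [Nat.testBit_two_pow_sub_one]
  simp only [decide_eq_true_eq]
  omega

lemma Efun_top (m : ℕ) : Efun m (2 ^ (2 * m) - 1) = m := by
  unfold Efun
  rw [Finset.filter_true_of_mem, Finset.card_range]
  intro i hi
  have := Finset.mem_range.1 hi
  rw [Nat.testBit_two_pow_sub_one]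
  simp only [decide_eq_true_eq]
  omega

lemma card_filter_wt2 (m c : ℕ) :
    ((Finset.range (2 ^ (2 * m))).filter fun u => wt2 m u = c).card = Nat.choose (2 * m) c := by
  unfold wt2
  exact S17.card_filter_wt (2 * m) c

lemma pow_eq_cases {K : Type*} [Field K] {m : ℕ} {ζ : K} (hm : 1 ≤ m)
    (hζ : IsPrimitiveRoot ζ (2 ^ (2 * m) - 1)) {u v : ℕ}
    (hu : u ≤ 2 ^ (2 * m) - 1) (hv : v ≤ 2 ^ (2 * m) - 1) (h : ζ ^ u = ζ ^ v) :
    u = v ∨ (u = 0 ∧ v = 2 ^ (2 * m) - 1) ∨ (u = 2 ^ (2 * m) - 1 ∧ v = 0) := by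
  set n := 2 ^ (2 * m) - 1 with hn
  have h4 : 4 ≤ 2 ^ (2 * m) := by
    calc (4 : ℕ) = 2 ^ 2 := by norm_num
      _ ≤ 2 ^ (2 * m) := Nat.pow_le_pow_right two_pos (by omega)
  have hnpos : 0 < n := by omega
  have h1 : ζ ^ n = 1 := hζ.pow_eq_one
  rcases eq_or_lt_of_le hu with hu' | hu'
  · rcases eq_or_lt_of_le hv with hv' | hv'
    · left; omega
    · right; right
      refine ⟨hu', ?_⟩
      exact hζ.pow_inj hv' hnpos (by rw [← h, hu', h1, pow_zero])
  · rcases eq_or_lt_of_le hv with hv' | hv'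
    · right; left
      refine ⟨?_, hv'⟩
      exact hζ.pow_inj hu' hnpos (by rw [h, hv', h1, pow_zero])
    · left; exact hζ.pow_inj hu' hv' h

end S17M

/-- For `0 ≤ r < 2m` and `I ⊆ M_r`,
`dim_{𝔽₂} C(r,I,2m) = Σ_{ℓ=0}^{r-1} binom(2m,ℓ) + Σ_{k∈I} |Θ^{(r)}_k|`. -/
theorem stmt17 (m : ℕ) (hm : 1 ≤ m) (K : Type*) [Field K] [Algebra (ZMod 2) K]
    [IsAlgClosure (ZMod 2) K] (ζ : K) (hζ : IsPrimitiveRoot ζ (2 ^ (2 * m) - 1))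
    (r : ℕ) (hr : r < 2 * m) (I : Finset ℕ) (hI : ∀ k ∈ I, k ∈ Mset m r) :
    Module.finrank (ZMod 2) (CextCode m ζ r ↑I)
      = ∑ ℓ ∈ Finset.range r, Nat.choose (2 * m) ℓ
        + ∑ k ∈ I, (ThetaR m ζ r ∩ ThetaK m ζ k).ncard := by
  classical
  have hm1 : 1 ≤ m := hm
  have h4 : (4 : ℕ) ^ m = 2 ^ (2 * m) := by
    rw [show (4 : ℕ) = 2 ^ 2 by norm_num, ← pow_mul]
  have h2w : 4 ≤ 2 ^ (2 * m) := by
    calc (4 : ℕ) = 2 ^ 2 := by norm_num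
      _ ≤ 2 ^ (2 * m) := Nat.pow_le_pow_right two_pos (by omega)
  set n : ℕ := 2 ^ (2 * m) - 1 with hn
  have hnn : 4 ^ m - 1 = n := by rw [h4]
  have hnpos : 0 < n := by omega
  set P : ℕ → Prop := fun u => wt2 m u ≤ 2 * m - r ∧
      ∀ k ∈ I, ¬(wt2 m u = 2 * m - r ∧
        ((Ofun m u : ℤ) - (Efun m u : ℤ)).natAbs = m - k) with hPdef
  set U : Finset ℕ := (Finset.Icc 1 n).filter P with hU
  set Z : Finset K := U.image (ζ ^ ·) with hZ
  set B : ℕ → Finset ℕ := fun k => (Finset.Icc 1 n).filter fun u =>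
      wt2 m u = 2 * m - r ∧ ((Ofun m u : ℤ) - (Efun m u : ℤ)).natAbs = m - k with hB
  have hinj : Set.InjOn (ζ ^ ·) ↑(Finset.Icc 1 n) := by
    intro u hu v hv h
    simp only [Finset.coe_Icc, Set.mem_Icc] at hu hv
    rcases S17M.pow_eq_cases hm1 hζ (by omega) (by omega) h with h' | h' | h' <;> omega
  -- Theta sets as finsets
  have hTheta : ∀ k ∈ I, ThetaR m ζ r ∩ ThetaK m ζ k = ↑((B k).image (ζ ^ ·)) := by
    intro k hk
    ext z
    constructor
    · rintro ⟨⟨u₁, hu₁, hwt₁, rfl⟩, ⟨u₂, hu₂, hOE₂, heq₂⟩⟩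
      rw [hnn] at hu₁ hu₂
      have hu₁pos : 1 ≤ u₁ := by
        rcases Nat.eq_zero_or_pos u₁ with h0 | h0
        · rw [h0, S17M.wt2_zero] at hwt₁; omega
        · omega
      refine Finset.mem_coe.2 (Finset.mem_image.2 ⟨u₁, ?_, rfl⟩)
      refine Finset.mem_filter.2 ⟨Finset.mem_Icc.2 ⟨hu₁pos, hu₁⟩, hwt₁, ?_⟩
      rcases S17M.pow_eq_cases hm1 hζ hu₁ hu₂ heq₂ with h' | h' | h'
      · rw [h']; exact hOE₂
      · omega
      · rw [h'.1, S17M.Ofun_top, S17M.Efun_top]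
        rw [h'.2, S17M.Ofun_zero, S17M.Efun_zero] at hOE₂
        simp only [Nat.cast_zero, sub_self, Int.natAbs_zero] at hOE₂ ⊢
        exact hOE₂
    · intro hz
      obtain ⟨u, hu, rfl⟩ := Finset.mem_image.1 (Finset.mem_coe.1 hz)
      obtain ⟨hIcc, h1, h2⟩ := Finset.mem_filter.1 hu
      have hIcc' := Finset.mem_Icc.1 hIcc
      have hun : u ≤ 4 ^ m - 1 := by rw [hnn]; omega
      exact ⟨⟨u, hun, h1, rfl⟩, ⟨u, hun, h2, rfl⟩⟩
  -- the zero set equals Z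
  have hZrI : ZrI m ζ r ↑I = ↑Z := by
    ext z
    constructor
    · rintro ⟨hz1, hz2⟩
      obtain ⟨u, hupos, hun, hwt, rfl⟩ := hz1
      rw [hnn] at hun
      have hwt' : wt2 m u ≤ 2 * m - r := by omega
      have hmem : u ∈ U := by
        refine Finset.mem_filter.2 ⟨Finset.mem_Icc.2 ⟨hupos, hun⟩, hwt', ?_⟩
        intro k hk hcon
        apply hz2
        refine Set.mem_biUnion (Finset.mem_coe.2 hk) ?_
        have hun' : u ≤ 4 ^ m - 1 := by rw [hnn]; omega
        exact ⟨⟨u, hun', hcon.1, rfl⟩, ⟨u, hun', hcon.2, rfl⟩⟩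
      exact Finset.mem_coe.2 (Finset.mem_image.2 ⟨u, hmem, rfl⟩)
    · intro hzZ
      obtain ⟨u, huU, rfl⟩ := Finset.mem_image.1 (Finset.mem_coe.1 hzZ)
      obtain ⟨hIcc, hwt', hforall⟩ := Finset.mem_filter.1 huU
      have hIcc' := Finset.mem_Icc.1 hIcc
      constructor
      · exact ⟨u, by omega, by rw [hnn]; omega, by push_cast; omega, rfl⟩
      · intro hzin
        rw [Set.mem_iUnion₂] at hzin
        obtain ⟨k, hk, hzk⟩ := hzin
        rw [hTheta k (Finset.mem_coe.1 hk)] at hzk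
        obtain ⟨u', hu'B, hequ⟩ := Finset.mem_image.1 (Finset.mem_coe.1 hzk)
        obtain ⟨hIcc2, hcon⟩ := Finset.mem_filter.1 hu'B
        have h2 := Finset.mem_Icc.1 hIcc2
        have huu : u' = u := by
          rcases S17M.pow_eq_cases hm1 hζ (by omega) (by omega) hequ with h' | h' | h' <;> omega
        exact hforall k (Finset.mem_coe.1 hk) (huu ▸ hcon)
  -- Z is closed under squaring
  have hZsq : ∀ z ∈ Z, z ^ 2 ∈ Z := by
    intro z hzZ
    obtain ⟨u, huU, rfl⟩ := Finset.mem_image.1 hzZ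
    obtain ⟨hIcc, hwt', hforall⟩ := Finset.mem_filter.1 huU
    have hIcc' := Finset.mem_Icc.1 hIcc
    have hu2 : u < 2 ^ (2 * m) := by omega
    have hupos : 0 < u := by omega
    refine Finset.mem_image.2 ⟨S17R.rot m u, ?_, ?_⟩
    · have hrlt := S17R.rot_lt hm1 hu2
      refine Finset.mem_filter.2 ⟨Finset.mem_Icc.2 ⟨S17R.rot_pos hm1 hupos hu2, by omega⟩,
        ?_, ?_⟩
      · rw [S17R.wt2_rot hm1 hu2]; exact hwt'
      · intro k hk hcon
        apply hforall k hk
        rw [S17R.wt2_rot hm1 hu2, S17R.Ofun_rot hm1 hu2, S17R.Efun_rot hm1 hu2] at hcon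
        refine ⟨hcon.1, ?_⟩
        rw [← Int.natAbs_neg, neg_sub]
        exact hcon.2
    · show ζ ^ (S17R.rot m u) = (ζ ^ u) ^ 2
      have h2u := S17R.two_mul_eq hm1 hu2
      calc ζ ^ (S17R.rot m u) = ζ ^ (S17R.rot m u) * 1 := (mul_one _).symm
        _ = ζ ^ (S17R.rot m u) * (ζ ^ (2 ^ (2 * m) - 1)) ^ (u / 2 ^ (2 * m - 1)) := by
            rw [hζ.pow_eq_one, one_pow]
        _ = ζ ^ (S17R.rot m u + (2 ^ (2 * m) - 1) * (u / 2 ^ (2 * m - 1))) := by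
            rw [pow_add, pow_mul ζ]
        _ = ζ ^ (2 * u) := by rw [← h2u]
        _ = ζ ^ (u * 2) := by rw [Nat.mul_comm]
        _ = (ζ ^ u) ^ 2 := by rw [pow_mul ζ u 2]
  -- cardinalities
  have hUsub : U ⊆ Finset.Icc 1 n := Finset.filter_subset _ _
  have hcardZ : Z.card = U.card :=
    Finset.card_image_of_injOn (hinj.mono (Finset.coe_subset.2 hUsub))
  have hUn : U.card ≤ n := by
    have := Finset.card_le_card hUsub
    rw [Nat.card_Icc] at this
    omega
  -- dimension of the star code
  have hstar : Module.finrank (ZMod 2) (CstarCode m ζ r ↑I) = (4 ^ m - 1) - Z.card := by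
    apply S17P.code_finrank (4 ^ m - 1) Z hZsq (by rw [hnn, hcardZ]; exact hUn)
    intro c
    constructor
    · intro hc z hzZ
      exact hc z (by rw [hZrI]; exact Finset.mem_coe.2 hzZ)
    · intro hc z hz
      rw [hZrI] at hz
      exact hc z (Finset.mem_coe.1 hz)
  -- extension preserves dimension
  have hext : Module.finrank (ZMod 2) (CextCode m ζ r ↑I)
      = Module.finrank (ZMod 2) (CstarCode m ζ r ↑I) := by
    let F : (Fin (4 ^ m - 1 + 1) → ZMod 2) →ₗ[ZMod 2] (Fin (4 ^ m - 1) → ZMod 2) :=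
      LinearMap.funLeft (ZMod 2) (ZMod 2) Fin.castSucc
    let G : CextCode m ζ r ↑I →ₗ[ZMod 2] CstarCode m ζ r ↑I :=
      LinearMap.codRestrict _ (F.comp (Submodule.subtype _)) (fun x => x.2.1)
    have hbij : Function.Bijective G := by
      constructor
      · intro x y hxy
        have h1 : Fin.init x.1 = Fin.init y.1 := congrArg Subtype.val hxy
        apply Subtype.ext
        funext i
        refine Fin.lastCases ?_ (fun j => ?_) i
        · rw [x.2.2, y.2.2, h1]
        · exact congrFun h1 j
      · intro c
        have hini : Fin.init (Fin.snoc c.1 (∑ i, c.1 i) : Fin (4 ^ m - 1 + 1) → ZMod 2)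
            = c.1 := Fin.init_snoc _ _
        have hmem : Fin.snoc c.1 (∑ i, c.1 i) ∈ CextCode m ζ r ↑I := by
          constructor
          · rw [hini]; exact c.2
          · rw [Fin.snoc_last, hini]
        exact ⟨⟨_, hmem⟩, Subtype.ext hini⟩
    exact (LinearEquiv.ofBijective G hbij).finrank_eq
  -- counting
  set A : Finset ℕ := (Finset.Icc 1 n).filter (fun u => wt2 m u ≤ 2 * m - r) with hA
  have hBsubA : ∀ k, B k ⊆ A := by
    intro k u hu
    obtain ⟨h1, h2, h3⟩ := Finset.mem_filter.1 hu
    exact Finset.mem_filter.2 ⟨h1, le_of_eq h2⟩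
  have hUeq : U = A \ I.biUnion B := by
    ext u
    constructor
    · intro hu
      obtain ⟨h1, h2, h3⟩ := Finset.mem_filter.1 hu
      refine Finset.mem_sdiff.2 ⟨Finset.mem_filter.2 ⟨h1, h2⟩, ?_⟩
      intro hcon
      obtain ⟨k, hk, hkB⟩ := Finset.mem_biUnion.1 hcon
      exact h3 k hk (Finset.mem_filter.1 hkB).2
    · intro hu
      obtain ⟨h1, h2⟩ := Finset.mem_sdiff.1 hu
      obtain ⟨h11, h12⟩ := Finset.mem_filter.1 h1
      refine Finset.mem_filter.2 ⟨h11, h12, ?_⟩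
      intro k hk hcon
      exact h2 (Finset.mem_biUnion.2 ⟨k, hk, Finset.mem_filter.2 ⟨h11, hcon⟩⟩)
  have hdisj : ∀ k₁ ∈ I, ∀ k₂ ∈ I, k₁ ≠ k₂ → Disjoint (B k₁) (B k₂) := by
    intro k₁ hk₁ k₂ hk₂ hne
    rw [Finset.disjoint_left]
    intro u hu1 hu2
    have h1 := (Finset.mem_filter.1 hu1).2.2
    have h2 := (Finset.mem_filter.1 hu2).2.2
    have hm₁ : k₁ ≤ m := (hI k₁ hk₁).1
    have hm₂ : k₂ ≤ m := (hI k₂ hk₂).1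
    omega
  have hUcard : U.card = A.card - ∑ k ∈ I, (B k).card := by
    rw [hUeq, Finset.card_sdiff_of_subset (Finset.biUnion_subset.2 fun k _ => hBsubA k),
      Finset.card_biUnion hdisj]
  have hTle : ∑ k ∈ I, (B k).card ≤ A.card := by
    rw [← Finset.card_biUnion hdisj]
    exact Finset.card_le_card (Finset.biUnion_subset.2 fun k _ => hBsubA k)
  have hAcard : A.card = (∑ j ∈ Finset.range (2 * m - r + 1), Nat.choose (2 * m) j) - 1 := by
    have hAeq : A = ((Finset.range (2 ^ (2 * m))).filter (fun u => wt2 m u ≤ 2 * m - r)).erase 0 := by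
      ext u
      simp only [hA, Finset.mem_filter, Finset.mem_erase, Finset.mem_Icc, Finset.mem_range]
      constructor
      · rintro ⟨⟨h1, h2⟩, h3⟩; exact ⟨by omega, by omega, h3⟩
      · rintro ⟨h1, h2, h3⟩; exact ⟨⟨by omega, by omega⟩, h3⟩
    rw [hAeq, Finset.card_erase_of_mem (Finset.mem_filter.2 ⟨Finset.mem_range.2 (by positivity),
      by rw [S17M.wt2_zero]; omega⟩)]
    congr 1
    rw [Finset.card_eq_sum_card_fiberwise (f := wt2 m) (t := Finset.range (2 * m - r + 1))
      (fun u hu => Finset.mem_range.2 (by have := (Finset.mem_filter.1 hu).2; omega))]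
    apply Finset.sum_congr rfl
    intro j hj
    have hj' := Finset.mem_range.1 hj
    have heq2 : ((Finset.range (2 ^ (2 * m))).filter (fun u => wt2 m u ≤ 2 * m - r)).filter
        (fun u => wt2 m u = j) = (Finset.range (2 ^ (2 * m))).filter (fun u => wt2 m u = j) := by
      rw [Finset.filter_filter]
      apply Finset.filter_congr
      intro u _
      constructor
      · rintro ⟨_, h⟩; exact h
      · intro h; exact ⟨by omega, h⟩
    rw [heq2]
    exact S17M.card_filter_wt2 m j
  have hsumB : ∑ k ∈ I, (B k).card = ∑ k ∈ I, (ThetaR m ζ r ∩ ThetaK m ζ k).ncard := by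
    apply Finset.sum_congr rfl
    intro k hk
    rw [hTheta k hk, Set.ncard_coe_finset]
    exact (Finset.card_image_of_injOn (hinj.mono (Finset.coe_subset.2
      (Finset.filter_subset _ _)))).symm
  have hchoose : ∑ ℓ ∈ Finset.range r, Nat.choose (2 * m) ℓ
      + ∑ j ∈ Finset.range (2 * m - r + 1), Nat.choose (2 * m) j = 2 ^ (2 * m) := by
    have h1 : ∑ ℓ ∈ Finset.range r, Nat.choose (2 * m) ℓ
        = ∑ j ∈ Finset.Ico (2 * m - r + 1) (2 * m + 1), Nat.choose (2 * m) j := by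
      refine Finset.sum_nbij' (fun ℓ => 2 * m - ℓ) (fun j => 2 * m - j) ?_ ?_ ?_ ?_ ?_
      · intro a ha; rw [Finset.mem_range] at ha; rw [Finset.mem_Ico]; omega
      · intro a ha; rw [Finset.mem_Ico] at ha; rw [Finset.mem_range]; omega
      · intro a ha; rw [Finset.mem_range] at ha; omega
      · intro a ha; rw [Finset.mem_Ico] at ha; omega
      · intro a ha; rw [Finset.mem_range] at ha
        exact (Nat.choose_symm (by omega)).symm
    rw [h1, add_comm, Finset.range_eq_Ico,
      Finset.sum_Ico_consecutive _ (by omega : 0 ≤ 2 * m - r + 1) (by omega : 2 * m - r + 1 ≤ 2 * m + 1),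
      ← Finset.range_eq_Ico, Nat.sum_range_choose]
  have hS1 : 1 ≤ ∑ j ∈ Finset.range (2 * m - r + 1), Nat.choose (2 * m) j := by
    calc 1 = Nat.choose (2 * m) 0 := (Nat.choose_zero_right _).symm
      _ ≤ _ := Finset.single_le_sum (fun i _ => Nat.zero_le _) (Finset.mem_range.2 (by omega))
  rw [hext, hstar, hnn, hcardZ, hUcard, hAcard, ← hsumB]
  omega
end
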